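/- arXiv:1011.6068 — 5 statements merged into one kernel-verified Lean document; each statement's English description precedes it below -/
import Mathlib

section
/- Let F be a field, n a positive integer, λ = (λ_1^{m_1},...,λ_k^{m_k}) a partition of length l(λ) ≤ n, and s a positive integer with s + l(λ) ≤ n. Then there exist coefficients a_μ, b_ν ∈ F such that m_{(λ_1^s)} · m_λ = C(s+m_1, s) · m_{(λ_1^{s+m_1}, λ_2^{m_2},...,λ_k^{m_k})} + Σ_μ a_μ m_μ + Σ_ν b_ν m_ν, where C(s+m_1, s) is the binomial coefficient (viewed in F), the first sum runs over partitions μ of length at most n with lp(μ) ≥ λ_1, lm(μ) = s and l(μ) = l(λ), and the second sum runs over partitions ν of length at most n with lp(ν) ≥ λ_1 and lm(ν) < s. -/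
open MvPolynomial

/-- The monomial symmetric polynomial in `n` variables attached to the multiset `lam`
(the parts of the partition; zero entries are discarded). -/
noncomputable def mSym (F : Type*) [Field F] (n : ℕ) (lam : Multiset ℕ) :
    MvPolynomial (Fin n) F :=
  msymm (Fin n) F
    (⟨Multiset.filter (0 < ·) lam, fun {_} hx => (Multiset.mem_filter.mp hx).2, rfl⟩ :
      Nat.Partition (Multiset.filter (0 < ·) lam).sum)

/-- The monomial symmetric polynomial, as an element of the subalgebra of
symmetric polynomials. -/
noncomputable def mSymS (F : Type*) [Field F] (n : ℕ) (lam : Multiset ℕ) :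
    symmetricSubalgebra (Fin n) F :=
  ⟨mSym F n lam, msymm_isSymmetric _ _ _⟩

/-- `lam` is (the multiset of parts of) a partition of length at most `n`. -/
def IsPartition (n : ℕ) (lam : Multiset ℕ) : Prop :=
  (∀ x ∈ lam, 0 < x) ∧ Multiset.card lam ≤ n

/-- The leading part `lp` of a partition. -/
def leadingPart (lam : Multiset ℕ) : ℕ := lam.sup

/-- The leading multiplicity `lm` of a partition. -/
def leadingMult (lam : Multiset ℕ) : ℕ := lam.count lam.sup

/-- The ideal `I_{n,d}` of truncated symmetric polynomials: the intersection of
`(x_1^{d+1}, …, x_n^{d+1})` with the subring of symmetric polynomials. -/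
noncomputable def truncIdeal (F : Type*) [Field F] (n d : ℕ) :
    Ideal (symmetricSubalgebra (Fin n) F) :=
  Ideal.comap (symmetricSubalgebra (Fin n) F).val
    (Ideal.span (Set.range fun i : Fin n => (X i : MvPolynomial (Fin n) F) ^ (d + 1)))

/-- Pad a multiset with zeros to size `n`. -/
def pad (n : ℕ) (lam : Multiset ℕ) : Multiset ℕ :=
  lam + Multiset.replicate (n - Multiset.card lam) 0

/-- The `n`-tuple `(λ_1, …, λ_n)`: the parts of `lam` padded with zeros and sorted
in nonincreasing order. -/
def sortedTuple (n : ℕ) (lam : Multiset ℕ) : Fin n → ℕ :=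
  fun i => (((pad n lam).sort (· ≤ ·)).reverse).getD i 0

/-- The partition `(a_0^{m_0}, …, a_k^{m_k})` having `m i` parts equal to `a i`. -/
def ofParts {k : ℕ} (a m : Fin k → ℕ) : Multiset ℕ :=
  ∑ i, Multiset.replicate (m i) (a i)


namespace Comp2Aux

open Finset

variable {n : ℕ}

/-- multiset of all n values of f -/
def vals (f : Fin n →₀ ℕ) : Multiset ℕ := Multiset.map f Finset.univ.val

/-- multiset of positive values of f -/
def prts (f : Fin n →₀ ℕ) : Multiset ℕ := (vals f).filter (0 < ·)

lemma vals_eq_ofFn (f : Fin n →₀ ℕ) : vals f = ↑(List.ofFn f) := by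
  simp [vals, Fin.univ_val_map]

lemma exists_perm_of_vals_eq {f f' : Fin n →₀ ℕ} (h : vals f = vals f') :
    ∃ e : Equiv.Perm (Fin n), ∀ i, f' i = f (e i) := by
  classical
  set u : Fin n → ℕ := ⇑f with hu
  set v : Fin n → ℕ := ⇑f' with hv
  have hmono1 : Monotone (u ∘ Tuple.sort u) := Tuple.monotone_sort u
  have hmono2 : Monotone (v ∘ Tuple.sort v) := Tuple.monotone_sort v
  have hperm : (List.ofFn (u ∘ Tuple.sort u)).Perm (List.ofFn (v ∘ Tuple.sort v)) := by
    rw [← Multiset.coe_eq_coe]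
    have h1 : ∀ (w : Fin n → ℕ) (σ : Equiv.Perm (Fin n)),
        (↑(List.ofFn (w ∘ σ)) : Multiset ℕ) = ↑(List.ofFn w) := by
      intro w σ
      rw [← Fin.univ_val_map, ← Fin.univ_val_map]
      have : Multiset.map (w ∘ σ) Finset.univ.val = Multiset.map w (Multiset.map σ Finset.univ.val) := by
        rw [Multiset.map_map]
      rw [this]
      congr 1
      have := congrArg Finset.val (Finset.map_univ_equiv σ)
      simpa [Finset.map_val] using this
    rw [h1 u, h1 v, ← vals_eq_ofFn, ← vals_eq_ofFn, h]
  have heq : List.ofFn (u ∘ Tuple.sort u) = List.ofFn (v ∘ Tuple.sort v) :=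
    List.Perm.eq_of_sortedLE (List.sortedLE_ofFn_iff.mpr hmono1)
      (List.sortedLE_ofFn_iff.mpr hmono2) hperm
  have heq2 : u ∘ Tuple.sort u = v ∘ Tuple.sort v := List.ofFn_injective heq
  refine ⟨((Tuple.sort v).symm).trans (Tuple.sort u), fun i => ?_⟩
  have := congrFun heq2 ((Tuple.sort v).symm i)
  simpa using this.symm

lemma card_vals (f : Fin n →₀ ℕ) : Multiset.card (vals f) = n := by simp [vals]

lemma mem_prts {f : Fin n →₀ ℕ} {v : ℕ} : v ∈ prts f ↔ 0 < v ∧ ∃ i, f i = v := by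
  constructor
  · intro h
    have h1 := Multiset.mem_filter.mp h
    obtain ⟨i, _, hi⟩ := Multiset.mem_map.mp h1.1
    exact ⟨h1.2, i, hi⟩
  · rintro ⟨hv, i, rfl⟩
    exact Multiset.mem_filter.mpr ⟨Multiset.mem_map.mpr ⟨i, Finset.mem_univ_val i, rfl⟩, hv⟩

lemma prts_pos {f : Fin n →₀ ℕ} : ∀ x ∈ prts f, 0 < x := fun _ hx => (Multiset.mem_filter.mp hx).2

lemma filter_map_univ (f : Fin n →₀ ℕ) (p : ℕ → Prop) [DecidablePred p] :
    (Multiset.map f Finset.univ.val).filter p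
      = Multiset.map f (Finset.univ.val.filter (fun i => p (f i))) := by
  rw [Multiset.filter_map]
  rfl

lemma prts_eq_map_support (f : Fin n →₀ ℕ) : prts f = Multiset.map f f.support.val := by
  classical
  rw [prts, vals, filter_map_univ]
  congr 1
  have : (Finset.univ.filter (fun i => 0 < f i)) = f.support := by
    ext i; simp [Finsupp.mem_support_iff]; omega
  exact congrArg Finset.val this

lemma card_prts (f : Fin n →₀ ℕ) : Multiset.card (prts f) = f.support.card := by
  rw [prts_eq_map_support]; simp

lemma card_prts_le (f : Fin n →₀ ℕ) : Multiset.card (prts f) ≤ n := by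
  have : Multiset.card (prts f) ≤ Multiset.card (vals f) := Multiset.card_le_card (Multiset.filter_le _ _)
  simpa [card_vals] using this

lemma count_prts (f : Fin n →₀ ℕ) {v : ℕ} (hv : 0 < v) :
    (prts f).count v = (Finset.univ.filter (fun i => f i = v)).card := by
  classical
  rw [prts, Multiset.count_filter, if_pos hv, vals, Multiset.count_map]
  have heq : Multiset.filter (fun a => v = f a) univ.val
      = Multiset.filter (fun i => f i = v) univ.val :=
    Multiset.filter_congr (fun x _ => ⟨Eq.symm, Eq.symm⟩)
  rw [heq]
  rfl

lemma count_prts_zero (f : Fin n →₀ ℕ) : (prts f).count 0 = 0 := by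
  rw [Multiset.count_eq_zero]
  intro h; exact absurd (prts_pos _ h) (lt_irrefl 0)

lemma sum_prts (f : Fin n →₀ ℕ) : (prts f).sum = ∑ i, f i := by
  classical
  have h := Multiset.filter_add_not (fun x => 0 < x) (vals f)
  have hz : ∀ x ∈ (vals f).filter (fun x => ¬ 0 < x), x = 0 := by
    intro x hx
    have := (Multiset.mem_filter.mp hx).2
    omega
  have hsum0 : ((vals f).filter (fun x => ¬ 0 < x)).sum = 0 :=
    Multiset.sum_eq_zero hz
  have h2 : (prts f).sum + ((vals f).filter (fun x => ¬ 0 < x)).sum = (vals f).sum := by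
    rw [prts, ← Multiset.sum_add, h]
  rw [hsum0, add_zero] at h2
  rw [h2, vals]
  simp [Finset.sum]

lemma sup_prts (f : Fin n →₀ ℕ) : (prts f).sup = Finset.univ.sup f := by
  classical
  apply le_antisymm
  · apply Multiset.sup_le.mpr
    intro x hx
    obtain ⟨_, i, rfl⟩ := mem_prts.mp hx
    exact Finset.le_sup (Finset.mem_univ i)
  · apply Finset.sup_le
    intro i _
    rcases Nat.eq_zero_or_pos (f i) with h | h
    · simp [h]
    · exact Multiset.le_sup (mem_prts.mpr ⟨h, i, rfl⟩)

lemma le_max_of_prts {f : Fin n →₀ ℕ} (i : Fin n) : f i ≤ (prts f).sup := by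
  rw [sup_prts]; exact Finset.le_sup (Finset.mem_univ i)

lemma prod_map_X (F : Type*) [Field F] (t : Multiset (Fin n)) :
    ((t.map (X : Fin n → MvPolynomial (Fin n) F)).prod) = monomial (Multiset.toFinsupp t) 1 := by
  classical
  induction t using Multiset.induction with
  | empty => simp
  | cons a t ih =>
      rw [Multiset.map_cons, Multiset.prod_cons, ih, X, monomial_mul]
      have h1 : ((Finsupp.single a 1) + Multiset.toFinsupp t) = Multiset.toFinsupp (a ::ₘ t) := by
        ext b
        simp only [Finsupp.add_apply, Multiset.toFinsupp_apply, Multiset.count_cons,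
          Finsupp.single_apply]
        split_ifs with h <;> omega
      rw [one_mul, h1]

lemma ofSym_parts (d : ℕ) (t : Sym (Fin n) d) :
    (Nat.Partition.ofSym t).parts = prts (Multiset.toFinsupp t.1) := by
  classical
  have hfun : ⇑(Multiset.toFinsupp t.1) = fun a => t.1.count a := by
    funext a; simp
  show t.1.dedup.map t.1.count = _
  rw [prts, vals, filter_map_univ, hfun]
  have huniv : Finset.univ.val.filter (fun i => 0 < t.1.count i) = t.1.dedup := by
    rw [Multiset.Nodup.ext (Multiset.Nodup.filter _ Finset.univ.nodup) (Multiset.nodup_dedup _)]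
    intro a
    simp [Multiset.count_pos]
  rw [huniv]

lemma coeff_mSym (F : Type*) [Field F] (lam : Multiset ℕ) (f : Fin n →₀ ℕ) :
    coeff f (mSym F n lam) = if prts f = lam.filter (0 < ·) then 1 else 0 := by
  classical
  set d := (lam.filter (0 < ·)).sum with hd
  set mu : Nat.Partition d :=
    ⟨Multiset.filter (0 < ·) lam, fun {_} hx => (Multiset.mem_filter.mp hx).2, rfl⟩ with hmu
  have key : ∀ x : {a : Sym (Fin n) d // Nat.Partition.ofSym a = mu},
      coeff f ((x.1.1.map X).prod : MvPolynomial (Fin n) F)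
        = if Multiset.toFinsupp x.1.1 = f then 1 else 0 := by
    intro x
    rw [prod_map_X, coeff_monomial]
  rw [mSym, msymm, coeff_sum]
  simp only [key]
  by_cases hc : prts f = lam.filter (0 < ·)
  · rw [if_pos hc]
    have hcard : Multiset.card (Finsupp.toMultiset f) = d := by
      rw [Finsupp.card_toMultiset]
      rw [hd, ← hc, sum_prts]
      rw [Finsupp.sum_fintype]
      · rfl
      · intro i; rfl
    set t : Sym (Fin n) d := ⟨Finsupp.toMultiset f, hcard⟩ with ht
    have htf : Multiset.toFinsupp t.1 = f := by
      rw [ht]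
      exact Finsupp.toMultiset_toFinsupp f
    have hofSym : Nat.Partition.ofSym t = mu := by
      apply Nat.Partition.ext
      rw [ofSym_parts, htf, hc]
    have hsum := Finset.sum_eq_single_of_mem (M := F) (⟨t, hofSym⟩ :
        {a : Sym (Fin n) d // Nat.Partition.ofSym a = mu})
      (Finset.mem_univ _) (f := fun x => if Multiset.toFinsupp x.1.1 = f then (1:F) else 0)
      (by
        intro x _ hx
        rw [if_neg]
        intro hxf
        apply hx
        apply Subtype.ext
        apply Subtype.ext
        have := congrArg (⇑Multiset.toFinsupp.symm) (hxf.trans htf.symm)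
        simpa using this)
    rw [hsum]
    dsimp only
    rw [if_pos htf]
  · rw [if_neg hc]
    apply Finset.sum_eq_zero
    intro x _
    rw [if_neg]
    intro hxf
    apply hc
    have h1 : (Nat.Partition.ofSym x.1).parts = prts f := by rw [ofSym_parts, hxf]
    rw [x.2] at h1
    rw [← h1]

noncomputable def T (A s : ℕ) (L : Multiset ℕ) (f : Fin n →₀ ℕ) :
    Finset ((Fin n →₀ ℕ) × (Fin n →₀ ℕ)) :=
  (Finset.HasAntidiagonal.antidiagonal f).filter (fun p => prts p.1 = Multiset.replicate s A ∧ prts p.2 = L)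

lemma mem_T {A s : ℕ} {L : Multiset ℕ} {f g h : Fin n →₀ ℕ} :
    (g, h) ∈ T A s L f ↔ g + h = f ∧ prts g = Multiset.replicate s A ∧ prts h = L := by
  classical
  simp only [T, Finset.mem_filter, Finset.HasAntidiagonal.mem_antidiagonal, and_assoc]

lemma repl_char {A s : ℕ} (hA : 0 < A) {g : Fin n →₀ ℕ} :
    prts g = Multiset.replicate s A ↔ (∀ i, g i = 0 ∨ g i = A) ∧ g.support.card = s := by
  constructor
  · intro hg
    constructor
    · intro i
      rcases Nat.eq_zero_or_pos (g i) with h0 | h0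
      · exact Or.inl h0
      · right
        have : g i ∈ prts g := mem_prts.mpr ⟨h0, i, rfl⟩
        rw [hg] at this
        exact Multiset.eq_of_mem_replicate this
    · have := congrArg Multiset.card hg
      rw [card_prts, Multiset.card_replicate] at this
      exact this
  · rintro ⟨h01, hcard⟩
    apply Multiset.eq_replicate.mpr
    refine ⟨by rw [card_prts]; exact hcard, ?_⟩
    intro b hb
    obtain ⟨hb0, i, rfl⟩ := mem_prts.mp hb
    rcases h01 i with h | h
    · omega
    · exact h

lemma classify {A s : ℕ} {L : Multiset ℕ} (hA : 0 < A) (hs : 0 < s)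
    (hLA : ∀ x ∈ L, x ≤ A)
    {f g h : Fin n →₀ ℕ} (hmem : (g, h) ∈ T A s L f) :
    A ≤ (prts f).sup ∧
      (prts f = L + Multiset.replicate s A ∨
        ((prts f).count ((prts f).sup) = s ∧ Multiset.card (prts f) = Multiset.card L) ∨
        (prts f).count ((prts f).sup) < s) := by
  classical
  obtain ⟨hf, hg, hh⟩ := mem_T.mp hmem
  obtain ⟨g01, gcard⟩ := (repl_char hA).mp hg
  have fap : ∀ i, f i = g i + h i := by
    intro i; rw [← hf]; simp
  have hhle : ∀ i, h i ≤ A := by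
    intro i
    rcases Nat.eq_zero_or_pos (h i) with h0 | h0
    · omega
    · exact hLA _ (by rw [← hh]; exact mem_prts.mpr ⟨h0, i, rfl⟩)
  -- an index where g equals A
  have hex : ∃ i0, g i0 = A := by
    have : g.support.Nonempty := by
      rw [← Finset.card_pos, gcard]; exact hs
    obtain ⟨i0, hi0⟩ := this
    rcases g01 i0 with h0 | h0
    · exact absurd h0 (Finsupp.mem_support_iff.mp hi0)
    · exact ⟨i0, h0⟩
  obtain ⟨i0, hi0⟩ := hex
  set M := (prts f).sup with hM
  have hAM : A ≤ M := by
    have h1 : A ≤ f i0 := by rw [fap i0, hi0]; omega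
    exact le_trans h1 (le_max_of_prts i0)
  have hfleM : ∀ i, f i ≤ M := le_max_of_prts
  refine ⟨hAM, ?_⟩
  by_cases hMA : M = A
  · -- disjoint supports, prts f = L + replicate s A
    left
    have hdisj : ∀ i, g i = 0 ∨ h i = 0 := by
      intro i
      rcases g01 i with h0 | h0
      · exact Or.inl h0
      · right
        have := hfleM i
        rw [hMA] at this
        have := fap i
        omega
    have key : ∀ v, (prts f).count v = (prts g).count v + (prts h).count v := by
      intro v
      rcases Nat.eq_zero_or_pos v with rfl | hv
      · rw [count_prts_zero, count_prts_zero, count_prts_zero]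
      · rw [count_prts f hv, count_prts g hv, count_prts h hv]
        have hunion : (Finset.univ.filter (fun i => f i = v))
            = (Finset.univ.filter (fun i => g i = v)) ∪ (Finset.univ.filter (fun i => h i = v)) := by
          ext i
          simp only [Finset.mem_filter, Finset.mem_union, Finset.mem_univ, true_and]
          have := fap i
          rcases hdisj i with h0 | h0 <;> omega
        have hd2 : Disjoint (Finset.univ.filter (fun i => g i = v))
            (Finset.univ.filter (fun i => h i = v)) := by
          rw [Finset.disjoint_left]
          intro i hi1 hi2
          simp only [Finset.mem_filter] at hi1 hi2
          rcases hdisj i with h0 | h0 <;> omega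
        rw [hunion, Finset.card_union_of_disjoint hd2]
    have : prts f = prts g + prts h := by
      apply Multiset.ext.mpr
      intro v
      rw [Multiset.count_add]
      exact key v
    rw [this, hg, hh, add_comm]
  · -- A < M
    have hAM' : A < M := lt_of_le_of_ne hAM (fun hc => hMA hc.symm)
    have hMpos : 0 < M := lt_trans hA hAM'
    right
    set K := Finset.univ.filter (fun i => f i = M) with hK
    have hcount : (prts f).count M = K.card := count_prts f hMpos
    have hKsub : K ⊆ g.support := by
      intro i hi
      simp only [hK, Finset.mem_filter] at hi
      rw [Finsupp.mem_support_iff]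
      intro h0
      have := fap i
      have := hhle i
      omega
    have hKle : K.card ≤ s := by
      calc K.card ≤ g.support.card := Finset.card_le_card hKsub
        _ = s := gcard
    rcases lt_or_eq_of_le hKle with hlt | heq
    · right; rw [hcount]; exact hlt
    · left
      refine ⟨by rw [hcount, heq], ?_⟩
      have hKeq : K = g.support :=
        Finset.eq_of_subset_of_card_le hKsub (by rw [gcard, heq])
      have hsupp : f.support = h.support := by
        ext i
        simp only [Finsupp.mem_support_iff]
        constructor
        · intro hfi
          rcases g01 i with h0 | h0
          · have := fap i; omega
          · have : i ∈ g.support := Finsupp.mem_support_iff.mpr (by omega)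
            rw [← hKeq, hK, Finset.mem_filter] at this
            have := this.2
            have := fap i
            omega
        · intro hhi
          have := fap i
          omega
      rw [← hh, card_prts, card_prts, hsupp]

lemma card_T_main {A s : ℕ} {L : Multiset ℕ} (hA : 0 < A) (hs : 0 < s)
    (hL : ∀ x ∈ L, 0 < x) (hLA : ∀ x ∈ L, x ≤ A)
    {f : Fin n →₀ ℕ} (hf : prts f = L + Multiset.replicate s A) :
    (T A s L f).card = (s + L.count A).choose s := by
  classical
  set m0 := L.count A with hm0
  set W := Finset.univ.filter (fun i => f i = A) with hWdef
  have hfle : ∀ i, f i ≤ A := by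
    intro i
    rcases Nat.eq_zero_or_pos (f i) with h0 | h0
    · omega
    · have : f i ∈ prts f := mem_prts.mpr ⟨h0, i, rfl⟩
      rw [hf, Multiset.mem_add] at this
      rcases this with h | h
      · exact hLA _ h
      · exact le_of_eq (Multiset.eq_of_mem_replicate h)
    -- W has m0 + s elements
  have hW : W.card = m0 + s := by
    have h1 : (prts f).count A = W.card := count_prts f hA
    rw [hf, Multiset.count_add, Multiset.count_replicate, if_pos rfl] at h1
    omega
  have happly : ∀ (S : Finset (Fin n)) (i : Fin n),
      (Finsupp.indicator S (fun _ _ => A)) i = if i ∈ S then A else 0 := by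
    intro S i
    rw [Finsupp.indicator_apply]
    exact dite_eq_ite
  have hsupport : ∀ (S : Finset (Fin n)), (Finsupp.indicator S (fun _ _ => A)).support = S := by
    intro S
    ext i
    rw [Finsupp.mem_support_iff, happly]
    split_ifs with h <;> simp [h] <;> omega
  rw [show (s + m0).choose s = ((m0 + s).choose s) by rw [Nat.add_comm]]
  rw [← hW, ← Finset.card_powersetCard]
  refine Finset.card_bij' (fun p _ => p.1.support)
    (fun S _ => ((Finsupp.indicator S (fun _ _ => A)), f - (Finsupp.indicator S (fun _ _ => A))))
    ?hi ?hj ?left ?right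
  case hi =>
    -- forward maps into powersetCard
    rintro ⟨g, h⟩ hmem
    dsimp only
    obtain ⟨hsum, hg, hh⟩ := mem_T.mp hmem
    obtain ⟨g01, gcard⟩ := (repl_char hA).mp hg
    rw [Finset.mem_powersetCard]
    constructor
    · intro i hi
      rw [Finsupp.mem_support_iff] at hi
      have hgi : g i = A := by rcases g01 i with h0 | h0 <;> omega
      have : f i = g i + h i := by rw [← hsum]; simp
      rw [hWdef, Finset.mem_filter]
      have := hfle i
      exact ⟨Finset.mem_univ i, by omega⟩
    · exact gcard
  case hj =>
    intro S hS
    rw [Finset.mem_powersetCard] at hS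
    obtain ⟨hSW, hScard⟩ := hS
    set gS := Finsupp.indicator S (fun _ _ => A) with hgSdef
    have hfS : ∀ i ∈ S, f i = A := by
      intro i hi
      have := hSW hi
      rw [hWdef, Finset.mem_filter] at this
      exact this.2
    have hle : gS ≤ f := by
      intro i
      rw [happly]
      split_ifs with h
      · rw [hfS i h]
      · omega
    rw [mem_T]
    refine ⟨add_tsub_cancel_of_le hle, ?_, ?_⟩
    · apply (repl_char hA).mpr
      constructor
      · intro i
        rw [happly]
        split_ifs with h
        · right; rfl
        · left; rfl
      · rw [hsupport]; exact hScard
    · -- prts (f - gS) = L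
      apply Multiset.ext.mpr
      intro v
      rcases Nat.eq_zero_or_pos v with rfl | hv
      · rw [count_prts_zero, Multiset.count_eq_zero.mpr]
        intro hc
        exact absurd (hL 0 hc) (lt_irrefl 0)
      · rw [count_prts _ hv]
        have hLv : L.count v = (prts f).count v - (if v = A then s else 0) := by
          rw [hf, Multiset.count_add, Multiset.count_replicate]
          have : (if A = v then s else 0) = (if v = A then s else 0) := by
            split_ifs with h1 h2 <;> first | rfl | omega
          omega
        by_cases hvA : v = A
        · subst hvA
          have : (Finset.univ.filter (fun i => (f - gS) i = v)) = W \ S := by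
            ext i
            simp only [Finset.mem_filter, Finset.mem_univ, true_and, Finset.mem_sdiff, hWdef]
            rw [Finsupp.tsub_apply, happly]
            by_cases h : i ∈ S
            · rw [if_pos h]
              have := hfS i h
              simp [h]
              omega
            · rw [if_neg h]
              simp [h]
          rw [this, Finset.card_sdiff_of_subset hSW, hW, hScard, hLv, count_prts f hv, ← hWdef]
          rw [if_pos rfl]
          omega
        · have : (Finset.univ.filter (fun i => (f - gS) i = v)) = (Finset.univ.filter (fun i => f i = v)) := by
            ext i
            simp only [Finset.mem_filter, Finset.mem_univ, true_and]
            rw [Finsupp.tsub_apply, happly]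
            by_cases h : i ∈ S
            · rw [if_pos h]
              have := hfS i h
              omega
            · rw [if_neg h]
              omega
          rw [this, hLv, count_prts f hv, if_neg hvA]
          omega
  case left =>
    rintro ⟨g, h⟩ hmem
    dsimp only
    obtain ⟨hsum, hg, hh⟩ := mem_T.mp hmem
    obtain ⟨g01, gcard⟩ := (repl_char hA).mp hg
    have hgeq : Finsupp.indicator g.support (fun _ _ => A) = g := by
      ext i
      rw [happly]
      split_ifs with h0
      · rw [Finsupp.mem_support_iff] at h0
        rcases g01 i with h1 | h1 <;> omega
      · rw [Finsupp.notMem_support_iff] at h0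
        omega
    have hheq : f - g = h := by
      rw [← hsum, add_tsub_cancel_left]
    rw [Prod.mk.injEq]
    exact ⟨hgeq, by rw [hgeq, hheq]⟩
  case right =>
    intro S _
    exact hsupport S

lemma vals_eq_prts_add (f : Fin n →₀ ℕ) :
    vals f = prts f + (vals f).filter (fun x => ¬ 0 < x) := by
  rw [prts, Multiset.filter_add_not]

lemma vals_eq_of_prts_eq {f f' : Fin n →₀ ℕ} (h : prts f = prts f') : vals f = vals f' := by
  have key : ∀ g : Fin n →₀ ℕ,
      vals g = prts g + Multiset.replicate (n - Multiset.card (prts g)) 0 := by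
    intro g
    rw [vals_eq_prts_add g]
    congr 1
    apply Multiset.eq_replicate.mpr
    constructor
    · have h1 := congrArg Multiset.card (vals_eq_prts_add g)
      rw [card_vals, Multiset.card_add] at h1
      omega
    · intro b hb
      have := (Multiset.mem_filter.mp hb).2
      omega
  rw [key f, key f', h]

lemma prts_equivMapDomain (e : Equiv.Perm (Fin n)) (g : Fin n →₀ ℕ) :
    prts (Finsupp.equivMapDomain e g) = prts g := by
  unfold prts vals
  congr 1
  have h1 : ⇑(Finsupp.equivMapDomain e g) = fun i => g (e.symm i) := by
    funext i; rw [Finsupp.equivMapDomain_apply]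
  rw [h1]
  have h2 : Multiset.map (fun i => g (e.symm i)) Finset.univ.val
      = Multiset.map g (Multiset.map e.symm Finset.univ.val) := by
    rw [Multiset.map_map]; rfl
  rw [h2]
  congr 1
  have := congrArg Finset.val (Finset.map_univ_equiv e.symm)
  simpa [Finset.map_val] using this

lemma equivMapDomain_add (e : Equiv.Perm (Fin n)) (g h : Fin n →₀ ℕ) :
    Finsupp.equivMapDomain e (g + h)
      = Finsupp.equivMapDomain e g + Finsupp.equivMapDomain e h := by
  ext i
  simp [Finsupp.equivMapDomain_apply]

lemma card_T_eq {A s : ℕ} {L : Multiset ℕ} {f f' : Fin n →₀ ℕ}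
    (hp : prts f = prts f') : (T A s L f).card = (T A s L f').card := by
  classical
  obtain ⟨e, he⟩ := exists_perm_of_vals_eq (vals_eq_of_prts_eq hp)
  have hf' : f' = Finsupp.equivMapDomain e.symm f := by
    ext i
    rw [Finsupp.equivMapDomain_apply, Equiv.symm_symm]
    exact he i
  refine Finset.card_bij'
    (fun p _ => (Finsupp.equivMapDomain e.symm p.1, Finsupp.equivMapDomain e.symm p.2))
    (fun p _ => (Finsupp.equivMapDomain e p.1, Finsupp.equivMapDomain e p.2))
    ?hi ?hj ?left ?right
  case hi =>
    rintro ⟨g, h⟩ hmem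
    dsimp only
    obtain ⟨hsum, hg, hh⟩ := mem_T.mp hmem
    rw [mem_T]
    refine ⟨?_, ?_, ?_⟩
    · rw [← equivMapDomain_add, hsum, hf']
    · rw [prts_equivMapDomain, hg]
    · rw [prts_equivMapDomain, hh]
  case hj =>
    rintro ⟨g, h⟩ hmem
    dsimp only
    obtain ⟨hsum, hg, hh⟩ := mem_T.mp hmem
    rw [mem_T]
    refine ⟨?_, ?_, ?_⟩
    · rw [← equivMapDomain_add, hsum, hf']
      ext i
      simp [Finsupp.equivMapDomain_apply]
    · rw [prts_equivMapDomain, hg]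
    · rw [prts_equivMapDomain, hh]
  case left =>
    rintro ⟨g, h⟩ _
    dsimp only
    rw [Prod.mk.injEq]
    constructor <;> (ext i; simp [Finsupp.equivMapDomain_apply])
  case right =>
    rintro ⟨g, h⟩ _
    dsimp only
    rw [Prod.mk.injEq]
    constructor <;> (ext i; simp [Finsupp.equivMapDomain_apply])

open Classical in
noncomputable def NT (n A s : ℕ) (L : Multiset ℕ) (μ : Multiset ℕ) : ℕ :=
  if h : ∃ f : Fin n →₀ ℕ, prts f = μ then (T A s L h.choose).card else 0

lemma NT_prts (A s : ℕ) (L : Multiset ℕ) (f : Fin n →₀ ℕ) :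
    NT n A s L (prts f) = (T A s L f).card := by
  classical
  have hex : ∃ f' : Fin n →₀ ℕ, prts f' = prts f := ⟨f, rfl⟩
  rw [NT]
  rw [dif_pos hex]
  exact card_T_eq hex.choose_spec

lemma sum_f_of_T {A s : ℕ} {L : Multiset ℕ} {f g h : Fin n →₀ ℕ}
    (hmem : (g, h) ∈ T A s L f) : (prts f).sum = s * A + L.sum := by
  obtain ⟨hf, hg, hh⟩ := mem_T.mp hmem
  rw [sum_prts, ← hf]
  have h1 : ∑ i, (g + h) i = (∑ i, g i) + ∑ i, h i := by
    simp [Finsupp.add_apply, Finset.sum_add_distrib]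
  rw [h1, ← sum_prts g, ← sum_prts h, hg, hh, Multiset.sum_replicate, smul_eq_mul]

lemma coeff_prod (F : Type*) [Field F] (A s : ℕ) (L : Multiset ℕ)
    (hA : 0 < A) (hL : ∀ x ∈ L, 0 < x) (f : Fin n →₀ ℕ) :
    coeff f (mSym F n (Multiset.replicate s A) * mSym F n L) = ((T A s L f).card : F) := by
  classical
  rw [coeff_mul]
  have h1 : ∀ p : (Fin n →₀ ℕ) × (Fin n →₀ ℕ),
      coeff p.1 (mSym F n (Multiset.replicate s A)) * coeff p.2 (mSym F n L)
        = if prts p.1 = Multiset.replicate s A ∧ prts p.2 = L then (1:F) else 0 := by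
    intro p
    rw [coeff_mSym, coeff_mSym,
      Multiset.filter_eq_self.mpr (fun x hx => hL x hx),
      Multiset.filter_eq_self.mpr
        (fun x hx => by rw [Multiset.eq_of_mem_replicate hx]; exact hA),
      ite_zero_mul_ite_zero, one_mul]
  rw [Finset.sum_congr rfl (fun p _ => h1 p), Finset.sum_boole]
  norm_cast

lemma coeff_finsupp_sum (F : Type*) [Field F] (c : Multiset ℕ →₀ F)
    (hpos : ∀ μ ∈ c.support, ∀ x ∈ μ, 0 < x) (f : Fin n →₀ ℕ) :
    coeff f (c.sum (fun mu r => r • mSym F n mu)) = c (prts f) := by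
  classical
  rw [Finsupp.sum, coeff_sum]
  have h1 : ∀ μ ∈ c.support, coeff f ((c μ) • mSym F n μ) = if μ = prts f then c μ else 0 := by
    intro μ hμ
    rw [coeff_smul, coeff_mSym, Multiset.filter_eq_self.mpr (hpos μ hμ)]
    by_cases hx : prts f = μ
    · rw [if_pos hx, if_pos hx.symm, smul_eq_mul, mul_one]
    · rw [if_neg hx, if_neg (fun hc => hx hc.symm), smul_eq_mul, mul_zero]
  rw [Finset.sum_congr rfl h1, Finset.sum_ite_eq' c.support (prts f) (fun μ => c μ)]
  split_ifs with h
  · rfl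
  · exact (Finsupp.notMem_support_iff.mp h).symm

lemma sup_main {A s : ℕ} {L : Multiset ℕ} (hs : 0 < s) (hLA : ∀ x ∈ L, x ≤ A) :
    (L + Multiset.replicate s A).sup = A := by
  apply le_antisymm
  · apply Multiset.sup_le.mpr
    intro x hx
    rcases Multiset.mem_add.mp hx with h | h
    · exact hLA x h
    · exact le_of_eq (Multiset.eq_of_mem_replicate h)
  · exact Multiset.le_sup
      (Multiset.mem_add.mpr (Or.inr (Multiset.mem_replicate.mpr ⟨hs.ne', rfl⟩)))

end Comp2Aux

open Comp2Aux in
/-- Lemma comp2: expansion of `m_{(λ_1^s)} · m_λ`, with the binomial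
coefficient `C(s+m_1, s)` viewed in `F`. The partition `λ = (λ_1^{m_1},…,λ_k^{m_k})`
has distinct parts `a 0 > a 1 > … > a k` indexed by `Fin (k+1)`. -/
theorem mSym_pow_mul (F : Type*) [Field F] (n : ℕ) (hn : 0 < n)
    (k : ℕ) (a m : Fin (k + 1) → ℕ)
    (ha : StrictAnti a) (hapos : ∀ i, 0 < a i) (hm : ∀ i, 0 < m i)
    (s : ℕ) (hs : 0 < s) (hlen : s + Multiset.card (ofParts a m) ≤ n) :
    ∃ aC bC : Multiset ℕ →₀ F,
      (∀ mu ∈ aC.support, IsPartition n mu ∧ a 0 ≤ leadingPart mu ∧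
        leadingMult mu = s ∧ Multiset.card mu = Multiset.card (ofParts a m)) ∧
      (∀ nu ∈ bC.support, IsPartition n nu ∧ a 0 ≤ leadingPart nu ∧
        leadingMult nu < s) ∧
      mSym F n (Multiset.replicate s (a 0)) * mSym F n (ofParts a m) =
      (((s + m 0).choose s : F)) • mSym F n (ofParts a m + Multiset.replicate s (a 0))
        + aC.sum (fun mu c => c • mSym F n mu)
        + bC.sum (fun nu c => c • mSym F n nu) := by
  classical
  set A := a 0 with hAdef
  set L := ofParts a m with hLdef
  have hA : 0 < A := hapos 0
  have hLpos : ∀ x ∈ L, 0 < x := by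
    intro x hx
    rw [hLdef, ofParts] at hx
    obtain ⟨i, _, hi⟩ := Multiset.mem_sum.mp hx
    rw [Multiset.eq_of_mem_replicate hi]
    exact hapos i
  have hLA : ∀ x ∈ L, x ≤ A := by
    intro x hx
    rw [hLdef, ofParts] at hx
    obtain ⟨i, _, hi⟩ := Multiset.mem_sum.mp hx
    rw [Multiset.eq_of_mem_replicate hi]
    exact ha.antitone (Fin.zero_le i)
  have hcount : L.count A = m 0 := by
    rw [hLdef, ofParts, Multiset.count_sum']
    have h1 : ∀ i : Fin (k+1), Multiset.count A (Multiset.replicate (m i) (a i))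
        = if i = 0 then m i else 0 := by
      intro i
      rw [Multiset.count_replicate]
      by_cases hi : i = 0
      · subst hi; rw [if_pos rfl, if_pos rfl]
      · rw [if_neg (fun hc => hi (ha.injective hc)), if_neg hi]
    rw [Finset.sum_congr rfl (fun i _ => h1 i), Finset.sum_ite_eq' Finset.univ 0 m,
      if_pos (Finset.mem_univ 0)]
  -- the candidate finset of partitions
  set Nt := s * A + L.sum with hNt
  have hmem_cand : ∀ μ : Multiset ℕ, (∀ x ∈ μ, 0 < x) → μ.sum = Nt →
      μ ∈ Finset.image (fun p : Nat.Partition Nt => p.parts) Finset.univ := by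
    intro μ h1 h2
    exact Finset.mem_image.mpr ⟨⟨μ, fun {x} hx => h1 x hx, h2⟩, Finset.mem_univ _, rfl⟩
  set PA : Multiset ℕ → Prop := fun μ => IsPartition n μ ∧ A ≤ leadingPart μ ∧
    leadingMult μ = s ∧ Multiset.card μ = Multiset.card L with hPAdef
  set PB : Multiset ℕ → Prop := fun μ => IsPartition n μ ∧ A ≤ leadingPart μ ∧
    leadingMult μ < s with hPBdef
  have hNT_cand : ∀ μ : Multiset ℕ, NT n A s L μ ≠ 0 →
      μ ∈ Finset.image (fun p : Nat.Partition Nt => p.parts) Finset.univ := by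
    intro μ h0
    by_cases hex : ∃ f : Fin n →₀ ℕ, prts f = μ
    · obtain ⟨f, hf⟩ := hex
      rw [← hf, NT_prts] at h0
      obtain ⟨⟨g, h⟩, hgh⟩ := Finset.card_pos.mp (Nat.pos_of_ne_zero h0)
      exact hmem_cand μ (hf ▸ prts_pos) (hf ▸ sum_f_of_T hgh)
    · rw [NT, dif_neg hex] at h0
      exact absurd rfl h0
  refine ⟨Finsupp.onFinset _ (fun μ => if PA μ then ((NT n A s L μ : F)) else 0)
      (fun μ hμ => hNT_cand μ (by
        intro hc
        apply hμ
        beta_reduce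
        rw [hc]
        split_ifs <;> simp)),
    Finsupp.onFinset _ (fun μ => if PB μ then ((NT n A s L μ : F)) else 0)
      (fun μ hμ => hNT_cand μ (by
        intro hc
        apply hμ
        beta_reduce
        rw [hc]
        split_ifs <;> simp)), ?_, ?_, ?_⟩
  · intro μ hμ
    have h0 := Finsupp.mem_support_iff.mp hμ
    rw [Finsupp.onFinset_apply] at h0
    beta_reduce at h0
    by_cases hPAμ : PA μ
    · exact hPAμ
    · rw [if_neg hPAμ] at h0; exact absurd rfl h0
  · intro μ hμ
    have h0 := Finsupp.mem_support_iff.mp hμ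
    rw [Finsupp.onFinset_apply] at h0
    beta_reduce at h0
    by_cases hPBμ : PB μ
    · exact hPBμ
    · rw [if_neg hPBμ] at h0; exact absurd rfl h0
  · apply MvPolynomial.ext
    intro f
    rw [coeff_prod F A s L hA hLpos f, coeff_add, coeff_add, coeff_smul, coeff_mSym]
    rw [coeff_finsupp_sum F _ (fun μ hμ => by
      have h0 := Finsupp.mem_support_iff.mp hμ
      rw [Finsupp.onFinset_apply] at h0
      beta_reduce at h0
      by_cases hPAμ : PA μ
      · exact hPAμ.1.1
      · rw [if_neg hPAμ] at h0; exact absurd rfl h0) f]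
    rw [coeff_finsupp_sum F _ (fun μ hμ => by
      have h0 := Finsupp.mem_support_iff.mp hμ
      rw [Finsupp.onFinset_apply] at h0
      beta_reduce at h0
      by_cases hPBμ : PB μ
      · exact hPBμ.1.1
      · rw [if_neg hPBμ] at h0; exact absurd rfl h0) f]
    rw [Finsupp.onFinset_apply, Finsupp.onFinset_apply]
    beta_reduce
    have hmain_pos : ∀ x ∈ (L + Multiset.replicate s A), 0 < x := by
      intro x hx
      rcases Multiset.mem_add.mp hx with h | h
      · exact hLpos x h
      · rw [Multiset.eq_of_mem_replicate h]; exact hA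
    rw [Multiset.filter_eq_self.mpr hmain_pos]
    by_cases hmain : prts f = L + Multiset.replicate s A
    · rw [if_pos hmain]
      have hsup : (prts f).sup = A := by rw [hmain]; exact sup_main hs hLA
      have hlm : leadingMult (prts f) = m 0 + s := by
        rw [leadingMult, hsup, hmain, Multiset.count_add, hcount,
          Multiset.count_replicate, if_pos rfl]
      have hPAf : ¬ PA (prts f) := by
        intro hc
        have := hc.2.2.1
        have := hm 0
        omega
      have hPBf : ¬ PB (prts f) := by
        intro hc
        have := hc.2.2
        omega
      rw [if_neg hPAf, if_neg hPBf, card_T_main hA hs hLpos hLA hmain, hcount]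
      simp [smul_eq_mul]
    · rw [if_neg hmain, smul_zero]
      rcases Finset.eq_empty_or_nonempty (T A s L f) with hT | hT
      · have hNT0 : NT (n := n) A s L (prts f) = 0 := by
          rw [NT_prts, hT, Finset.card_empty]
        rw [hNT0, hT]
        push_cast
        split_ifs <;> simp
      · obtain ⟨⟨g, h⟩, hgh⟩ := hT
        obtain ⟨hsupA, htri⟩ := classify hA hs hLA hgh
        have hIsPart : IsPartition n (prts f) := ⟨prts_pos, card_prts_le f⟩
        rcases htri with h1 | h2 | h3
        · exact absurd h1 hmain
        · have hPAf : PA (prts f) := ⟨hIsPart, hsupA, h2.1, h2.2⟩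
          have hPBf : ¬ PB (prts f) := by
            intro hc
            have hc2 : (prts f).count (prts f).sup < s := hc.2.2
            have h21 : (prts f).count (prts f).sup = s := h2.1
            omega
          rw [if_pos hPAf, if_neg hPBf, NT_prts]
          simp [smul_eq_mul]
        · have hPBf : PB (prts f) := ⟨hIsPart, hsupA, h3⟩
          have hPAf : ¬ PA (prts f) := by
            intro hc
            have hc2 : (prts f).count (prts f).sup = s := hc.2.2.1
            have h31 : (prts f).count (prts f).sup < s := h3
            omega
          rw [if_neg hPAf, if_pos hPBf, NT_prts]
          simp [smul_eq_mul]
end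

section
/- Let F be a field, n a positive integer, d a nonnegative integer, and λ a partition of length at most n. Then the monomial symmetric polynomial m_λ belongs to the ideal I_{n,d} if and only if lp(λ) ≥ d+1. -/
open MvPolynomial

lemma prod_map_X (F : Type*) [Field F] {n : ℕ} (s : Multiset (Fin n)) :
    (s.map (X : Fin n → MvPolynomial (Fin n) F)).prod = monomial s.toFinsupp 1 := by
  induction s using Multiset.induction_on with
  | empty => simp
  | cons a s ih =>
    rw [Multiset.map_cons, Multiset.prod_cons, ih]
    have hX : (X a : MvPolynomial (Fin n) F) = monomial (Finsupp.single a 1) 1 := by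
      rw [← X_pow_eq_monomial, pow_one]
    rw [hX, monomial_mul, one_mul]
    congr 1
    rw [show (a ::ₘ s) = {a} + s from rfl, Multiset.toFinsupp_add,
      Multiset.toFinsupp_singleton]

lemma vals_eq {n : ℕ} (α : Fin n →₀ ℕ) :
    α.support.val.map α = (Finset.univ.val.map α).filter (0 < ·) := by
  have hs : α.support = Finset.univ.filter (fun j => α j ≠ 0) := by
    ext j; simp [Finsupp.mem_support_iff]
  rw [hs, Finset.filter_val, Multiset.filter_map]
  congr 1
  apply Multiset.filter_congr
  intro x _
  simp [Nat.pos_iff_ne_zero]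

lemma vals_toFinsupp {n : ℕ} (t : Multiset (Fin n)) :
    (Multiset.toFinsupp t).support.val.map (Multiset.toFinsupp t) = t.dedup.map t.count := by
  rw [Multiset.toFinsupp_support]
  rw [show (Multiset.toFinset t).val = t.dedup from rfl]
  exact Multiset.map_congr rfl (fun x _ => Multiset.toFinsupp_apply t x)

lemma mem_support_mSym (F : Type*) [Field F] (n : ℕ) (lam : Multiset ℕ) (α : Fin n →₀ ℕ) :
    α ∈ (mSym F n lam).support ↔
      α.support.val.map α = Multiset.filter (0 < ·) lam := by
  classical
  set N := (Multiset.filter (0 < ·) lam).sum with hN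
  set μ : Nat.Partition N :=
    ⟨Multiset.filter (0 < ·) lam, fun {_} hx => (Multiset.mem_filter.mp hx).2, rfl⟩ with hμ
  have hcoeff : coeff α (mSym F n lam) =
      ∑ s : {a : Sym (Fin n) N // Nat.Partition.ofSym a = μ},
        if Multiset.toFinsupp s.1.1 = α then (1 : F) else 0 := by
    rw [mSym, msymm, coeff_sum]
    exact Finset.sum_congr rfl fun s _ => by rw [prod_map_X, coeff_monomial]
  rw [mem_support_iff, hcoeff]
  constructor
  · intro h
    obtain ⟨s, -, hs⟩ := Finset.exists_ne_zero_of_sum_ne_zero h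
    have heq : Multiset.toFinsupp s.1.1 = α := by
      by_contra hc
      rw [if_neg hc] at hs
      exact hs rfl
    have hparts := congrArg Nat.Partition.parts s.2
    have : (Nat.Partition.ofSym s.1).parts = s.1.1.dedup.map s.1.1.count := rfl
    rw [this] at hparts
    rw [← heq, vals_toFinsupp, hparts]
  · intro h
    have hcard : Multiset.card (Finsupp.toMultiset α) = N := by
      rw [Finsupp.card_toMultiset, Finsupp.sum, hN]
      calc (∑ a ∈ α.support, α a) = (α.support.val.map α).sum := by
            rw [Finset.sum]
        _ = (Multiset.filter (0 < ·) lam).sum := by rw [h]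
    set s₀ : Sym (Fin n) N := ⟨Finsupp.toMultiset α, hcard⟩ with hs₀
    have hof : Nat.Partition.ofSym s₀ = μ := by
      apply Nat.Partition.ext
      show (Finsupp.toMultiset α).dedup.map (Finsupp.toMultiset α).count
          = Multiset.filter (0 < ·) lam
      rw [← vals_toFinsupp, Finsupp.toMultiset_toFinsupp, h]
    rw [Fintype.sum_eq_single (⟨s₀, hof⟩ : {a : Sym (Fin n) N // Nat.Partition.ofSym a = μ})]
    · simp [hs₀, Finsupp.toMultiset_toFinsupp]
    · intro b hb
      have : Multiset.toFinsupp b.1.1 ≠ α := by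
        intro hc
        apply hb
        have : b.1.1 = Finsupp.toMultiset α := by
          rw [← hc, Multiset.toFinsupp_toMultiset]
        ext : 2
        · exact this
      rw [if_neg this]

lemma exists_support_full (n : ℕ) (l : List ℕ) (hl : ∀ x ∈ l, 0 < x) (hn : l.length ≤ n) :
    ∃ α : Fin n →₀ ℕ, α.support.val.map α = (l : Multiset ℕ) := by
  classical
  refine ⟨Finsupp.equivFunOnFinite.symm (fun j : Fin n => l.getD j 0), ?_⟩
  rw [vals_eq]
  have happ : ∀ j : Fin n,
      (Finsupp.equivFunOnFinite.symm (fun j : Fin n => l.getD j 0)) j = l.getD j 0 :=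
    fun j => rfl
  have h1 : Finset.univ.val.map (Finsupp.equivFunOnFinite.symm (fun j : Fin n => l.getD j 0))
      = (List.ofFn (fun j : Fin n => l.getD j 0) : Multiset ℕ) := by
    rw [← Fin.univ_val_map]
    exact Multiset.map_congr rfl fun j _ => happ j
  have hofn : List.ofFn (fun j : Fin n => l.getD j 0)
      = l ++ List.replicate (n - l.length) 0 := by
    apply List.ext_getElem
    · simp; omega
    · intro i h1 h2
      simp only [List.getElem_ofFn]
      by_cases hi : i < l.length
      · rw [List.getElem_append_left hi, List.getD_eq_getElem l 0 hi]
      · rw [List.getElem_append_right (by omega), List.getElem_replicate,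
          List.getD_eq_default l 0 (by omega)]
  rw [h1, hofn, ← Multiset.coe_add, Multiset.filter_add]
  have h2 : Multiset.filter (0 < ·) (l : Multiset ℕ) = (l : Multiset ℕ) :=
    Multiset.filter_eq_self.mpr (by intro a ha; exact hl a (by simpa using ha))
  have h3 : Multiset.filter (0 < ·) ((List.replicate (n - l.length) 0 : List ℕ) : Multiset ℕ)
      = 0 := by
    rw [Multiset.filter_eq_nil]
    intro a ha
    have : a = 0 := List.eq_of_mem_replicate (by simpa using ha)
    omega
  rw [h2, h3, add_zero]

lemma sup_mem_of_ne_zero (s : Multiset ℕ) (hs : s ≠ 0) : s.sup ∈ s := by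
  induction s using Multiset.induction_on with
  | empty => exact absurd rfl hs
  | cons a t ih =>
    rw [Multiset.sup_cons]
    by_cases ht : t = 0
    · subst ht; simp
    · rcases le_total a t.sup with h | h
      · rw [sup_eq_right.mpr h]
        exact Multiset.mem_cons_of_mem (ih ht)
      · rw [sup_eq_left.mpr h]
        exact Multiset.mem_cons_self a t

/-- `m_λ ∈ I_{n,d}` if and only if `lp(λ) ≥ d+1`. -/
theorem mSymS_mem_truncIdeal_iff (F : Type*) [Field F] (n : ℕ) (hn : 0 < n) (d : ℕ)
    (lam : Multiset ℕ) (hlam : IsPartition n lam) :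
    mSymS F n lam ∈ truncIdeal F n d ↔ d + 1 ≤ leadingPart lam := by
  classical
  have hfilter : Multiset.filter (0 < ·) lam = lam := Multiset.filter_eq_self.mpr hlam.1
  have hspan : (Set.range fun i : Fin n => (X i : MvPolynomial (Fin n) F) ^ (d + 1))
      = (fun s => monomial s (1 : F)) '' (Set.range fun i : Fin n => Finsupp.single i (d + 1)) := by
    rw [← Set.range_comp]
    apply congrArg
    funext i
    simp [Function.comp, X_pow_eq_monomial]
  have hmem : mSymS F n lam ∈ truncIdeal F n d ↔
      ∀ α ∈ (mSym F n lam).support, ∃ i : Fin n, d + 1 ≤ α i := by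
    rw [truncIdeal, Ideal.mem_comap]
    show mSym F n lam ∈ _ ↔ _
    rw [hspan, mem_ideal_span_monomial_image]
    constructor
    · intro h α hα
      obtain ⟨si, hsi, hle⟩ := h α hα
      obtain ⟨i, rfl⟩ := hsi
      exact ⟨i, (Finsupp.single_le_iff).mp hle⟩
    · intro h α hα
      obtain ⟨i, hi⟩ := h α hα
      exact ⟨Finsupp.single i (d + 1), ⟨i, rfl⟩, (Finsupp.single_le_iff).mpr hi⟩
  rw [hmem]
  constructor
  · intro h
    obtain ⟨α, hα⟩ := exists_support_full n lam.toList
      (fun x hx => hlam.1 x (by rwa [← Multiset.mem_toList]))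
      (by rw [Multiset.length_toList]; exact hlam.2)
    rw [Multiset.coe_toList] at hα
    have hαsupp : α ∈ (mSym F n lam).support :=
      (mem_support_mSym F n lam α).mpr (by rw [hfilter, hα])
    obtain ⟨i, hi⟩ := h α hαsupp
    have hmemα : α i ∈ lam := by
      have hi0 : i ∈ α.support := Finsupp.mem_support_iff.mpr (by omega)
      have : α i ∈ α.support.val.map α :=
        Multiset.mem_map.mpr ⟨i, hi0, rfl⟩
      rwa [hα] at this
    exact hi.trans (Multiset.le_sup hmemα)
  · intro h α hα
    rw [mem_support_mSym, hfilter] at hα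
    have hne : lam ≠ 0 := by
      rintro rfl
      simp [leadingPart] at h
    have hsup : lam.sup ∈ α.support.val.map α := by
      rw [hα]; exact sup_mem_of_ne_zero lam hne
    obtain ⟨i, _, hi⟩ := Multiset.mem_map.mp hsup
    refine ⟨i, ?_⟩
    rw [hi]
    exact h
end

section
/- (Adem–Reichstein) Let F be a field, n a positive integer, d a nonnegative integer, and let I = (m_{(d+1)}, m_{(d+2)}, ..., m_{(d+n)}) be the ideal of F[x_1,...,x_n]^{S_n} generated by the power sums of degrees d+1 through d+n. Then I contains every monomial symmetric polynomial m_λ with λ a partition of length at most n such that lp(λ) ≥ d+1 and the leading multiplicity lm(λ), viewed as an element of F, is invertible (i.e., nonzero in F). -/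
set_option maxHeartbeats 1000000
set_option synthInstance.maxHeartbeats 400000


open MvPolynomial

/-! ### Auxiliary machinery for the Adem–Reichstein theorem. -/

namespace AR

open Finset

variable {F : Type*} [Field F] {n : ℕ}

/-- The multiset of positive exponents of an exponent vector. -/
def expP (α : Fin n →₀ ℕ) : Multiset ℕ :=
  (Multiset.map α Finset.univ.val).filter (0 < ·)

variable (n) in
/-- The finset of exponent vectors whose positive part is `lam`. -/
noncomputable def AA (lam : Multiset ℕ) : Finset (Fin n →₀ ℕ) :=
  ((Fintype.piFinset fun _ : Fin n => Finset.range (lam.sum + 1)).filter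
    (fun f => (Multiset.map f Finset.univ.val).filter (0 < ·) = lam)).image
    Finsupp.equivFunOnFinite.symm

lemma mem_AA {lam : Multiset ℕ} {α : Fin n →₀ ℕ} : α ∈ AA n lam ↔ expP α = lam := by
  constructor
  · rintro h
    obtain ⟨f, hf, rfl⟩ := Finset.mem_image.mp h
    obtain ⟨-, hf2⟩ := Finset.mem_filter.mp hf
    simpa [expP] using hf2
  · intro h
    refine Finset.mem_image.mpr ⟨α, Finset.mem_filter.mpr ⟨?_, by simpa [expP] using h⟩, by simp⟩
    refine Fintype.mem_piFinset.mpr fun i => Finset.mem_range.mpr ?_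
    rcases Nat.eq_zero_or_pos (α i) with h0 | h0
    · omega
    · have hm : α i ∈ expP α := by
        refine Multiset.mem_filter.mpr ⟨Multiset.mem_map.mpr ⟨i, by simp, rfl⟩, h0⟩
      rw [h] at hm
      have := Multiset.single_le_sum (by intro x _; exact Nat.zero_le x) _ hm
      omega

variable (F n) in
/-- Monomial symmetric polynomial, concrete version. -/
noncomputable def MM (lam : Multiset ℕ) : MvPolynomial (Fin n) F :=
  ∑ α ∈ AA n lam, monomial α (1 : F)

lemma prod_map_X (m : Multiset (Fin n)) :
    (m.map (X : Fin n → MvPolynomial (Fin n) F)).prod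
      = monomial (Multiset.toFinsupp m) (1 : F) := by
  induction m using Multiset.induction with
  | empty => simp [monomial_zero']
  | cons a m ih =>
      rw [Multiset.map_cons, Multiset.prod_cons, ih, show (a ::ₘ m) = {a} + m from rfl,
        Multiset.toFinsupp_add, Multiset.toFinsupp_singleton]
      rw [X, monomial_mul, one_mul]

lemma expP_toFinsupp (m : Multiset (Fin n)) :
    expP (Multiset.toFinsupp m) = m.dedup.map m.count := by
  classical
  have h1 : expP (Multiset.toFinsupp m)
      = Multiset.map (fun i => m.count i) (Finset.univ.val.filter fun i => 0 < m.count i) := by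
    rw [expP, Multiset.filter_map]
    rfl
  have h2 : (Finset.univ.val.filter fun i => 0 < m.count i) = m.dedup := by
    refine (Multiset.Nodup.ext (Multiset.Nodup.filter _ Finset.univ.nodup)
      (Multiset.nodup_dedup m)).mpr fun a => ?_
    simp [Multiset.count_pos, Multiset.mem_dedup]
  rw [h1, h2]

lemma sum_expP (α : Fin n →₀ ℕ) : (expP α).sum = ∑ i : Fin n, α i := by
  have hsplit := Multiset.filter_add_not (fun x => 0 < x) (Multiset.map α Finset.univ.val)
  have hz : ((Multiset.map α Finset.univ.val).filter fun x => ¬ 0 < x).sum = 0 := by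
    apply Multiset.sum_eq_zero
    intro x hx
    have h3 := (Multiset.mem_filter.mp hx).2
    omega
  have : (Multiset.map α Finset.univ.val).sum = ∑ i : Fin n, α i := rfl
  rw [← this, ← hsplit, Multiset.sum_add, hz, add_zero, expP]

lemma card_toMultiset_eq (α : Fin n →₀ ℕ) (lam : Multiset ℕ) (h : α ∈ AA n lam) :
    Multiset.card (Finsupp.toMultiset α) = lam.sum := by
  rw [Finsupp.card_toMultiset, Finsupp.sum_fintype _ _ (fun _ => rfl)]
  rw [← mem_AA.mp h, sum_expP]
  rfl

variable (F) in
/-- Bridge: `mSym` equals the concrete `MM`. -/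
lemma mSym_eq_MM (lam : Multiset ℕ) :
    mSym F n lam = MM F n (Multiset.filter (0 < ·) lam) := by
  classical
  rw [mSym]
  set L := Multiset.filter (0 < ·) lam with hL
  set P : Nat.Partition L.sum :=
    ⟨L, fun {_} hx => (Multiset.mem_filter.mp hx).2, rfl⟩ with hP
  have e_mem : ∀ (s : {a : Sym (Fin n) L.sum // Nat.Partition.ofSym a = P}),
      Multiset.toFinsupp s.1.1 ∈ AA n L := by
    intro s
    rw [mem_AA, expP_toFinsupp]
    exact congrArg Nat.Partition.parts s.2
  rw [msymm, MM, ← Finset.sum_coe_sort (AA n L) (fun α => monomial α (1:F))]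
  refine Fintype.sum_bijective (fun s => ⟨Multiset.toFinsupp s.1.1, e_mem s⟩) ⟨?_, ?_⟩ _ _ ?_
  · intro a b hab
    apply Subtype.ext; apply Subtype.ext
    have := congrArg Subtype.val hab
    simpa using Multiset.toFinsupp.injective this
  · rintro ⟨β, hβ⟩
    refine ⟨⟨⟨Finsupp.toMultiset β, card_toMultiset_eq _ _ hβ⟩, ?_⟩, ?_⟩
    · apply Nat.Partition.ext
      show (Finsupp.toMultiset β : Multiset (Fin n)).dedup.map _ = L
      rw [← expP_toFinsupp, Finsupp.toMultiset_toFinsupp]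
      exact mem_AA.mp hβ
    · apply Subtype.ext
      simp [Finsupp.toMultiset_toFinsupp]
  · intro s
    simp only
    rw [prod_map_X]

/-- positive exponents away from coordinate `i` -/
def epe (α : Fin n →₀ ℕ) (i : Fin n) : Multiset ℕ :=
  (Multiset.map α (Finset.univ.val.erase i)).filter (0 < ·)

lemma expP_eq (α : Fin n →₀ ℕ) (i : Fin n) :
    expP α = if 0 < α i then α i ::ₘ epe α i else epe α i := by
  have h1 : Multiset.map α Finset.univ.val
      = α i ::ₘ Multiset.map α (Finset.univ.val.erase i) := by
    rw [← Multiset.map_cons, Multiset.cons_erase (Finset.mem_univ i)]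
  rw [expP, h1, Multiset.filter_cons, epe]
  split_ifs with h
  · rw [Multiset.singleton_add]
  · rw [zero_add]

lemma epe_congr {α β : Fin n →₀ ℕ} (i : Fin n) (h : ∀ j, j ≠ i → α j = β j) :
    epe α i = epe β i := by
  rw [epe, epe, Multiset.map_congr rfl]
  intro x hx
  exact h x (Multiset.Nodup.mem_erase_iff Finset.univ.nodup |>.mp hx).1

lemma epe_eq {α : Fin n →₀ ℕ} {μ : Multiset ℕ} (hα : expP α = μ) (h0 : 0 ∉ μ) (i : Fin n) :
    epe α i = μ.erase (α i) := by
  rcases Nat.eq_zero_or_pos (α i) with h | h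
  · rw [expP_eq α i, if_neg (by omega)] at hα
    rw [hα, h, Multiset.erase_of_notMem h0]
  · rw [expP_eq α i, if_pos h] at hα
    rw [← hα, Multiset.erase_cons_head]

lemma add_single_apply_ne {α : Fin n →₀ ℕ} {s : ℕ} {i j : Fin n} (h : j ≠ i) :
    (α + Finsupp.single i s) j = α j := by
  simp [Finsupp.single_apply_eq_zero.mpr (fun h' => absurd h' h)]

lemma sub_single_apply_ne {β : Fin n →₀ ℕ} {s : ℕ} {i j : Fin n} (h : j ≠ i) :
    (β - Finsupp.single i s) j = β j := by
  rw [Finsupp.tsub_apply, Finsupp.single_apply_eq_zero.mpr (fun h' => absurd h' h), tsub_zero]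

lemma add_single_expP {α : Fin n →₀ ℕ} {μ : Multiset ℕ} {s : ℕ} (hs : 0 < s)
    (hα : expP α = μ) (h0 : 0 ∉ μ) (i : Fin n) :
    expP (α + Finsupp.single i s) = (α i + s) ::ₘ μ.erase (α i) := by
  have hv : (α + Finsupp.single i s) i = α i + s := by simp
  rw [expP_eq _ i, hv, if_pos (by omega)]
  rw [epe_congr i (fun j hj => add_single_apply_ne hj), epe_eq hα h0 i]

lemma sub_single_expP {β : Fin n →₀ ℕ} {μ ν : Multiset ℕ} {r s : ℕ} (hs : 0 < s)
    (hβ : expP β = ν) (hν : ν = (r + s) ::ₘ μ.erase r) (hr : r = 0 ∨ r ∈ μ) (h0 : 0 ∉ μ)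
    (i : Fin n) (hi : β i = r + s) :
    expP (β - Finsupp.single i s) = μ := by
  have h0ν : (0:ℕ) ∉ ν := by
    rw [hν]
    intro hmem
    rcases Multiset.mem_cons.mp hmem with h | h
    · omega
    · exact h0 (Multiset.mem_of_mem_erase h)
  have hv : (β - Finsupp.single i s) i = r := by
    rw [Finsupp.tsub_apply, Finsupp.single_eq_same, hi]
    omega
  have hepe : epe (β - Finsupp.single i s) i = μ.erase r := by
    rw [epe_congr i (fun j hj => sub_single_apply_ne hj), epe_eq hβ h0ν i, hi, hν,
      Multiset.erase_cons_head]
  rw [expP_eq _ i, hv, hepe]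
  rcases hr with h | h
  · rw [if_neg (by omega), h, Multiset.erase_of_notMem h0]
  · have hrpos : 0 < r := by
      rcases Nat.eq_zero_or_pos r with h' | h'
      · exact absurd (h' ▸ h) h0
      · exact h'
    rw [if_pos hrpos]
    exact Multiset.cons_erase h

lemma card_filter_eq_count (β : Fin n →₀ ℕ) (t : ℕ) (ht : 0 < t) :
    (Finset.univ.filter (fun i => β i = t)).card = Multiset.count t (expP β) := by
  rw [expP, Multiset.count_filter, if_pos ht, Multiset.count_map]
  have h1 : (Finset.univ.filter (fun i => β i = t)).card
      = Multiset.card (Multiset.filter (fun i => β i = t) Finset.univ.val) := rfl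
  rw [h1]
  congr 1
  exact Multiset.filter_congr (fun x _ => eq_comm)

lemma pairsum (B : Finset (Fin n →₀ ℕ)) (t : ℕ) (f : (Fin n →₀ ℕ) → MvPolynomial (Fin n) F) :
    ∑ p ∈ (Finset.univ ×ˢ B).filter (fun p => p.2 p.1 = t), f p.2
      = ∑ β ∈ B, (Finset.univ.filter (fun i => β i = t)).card • f β := by
  rw [Finset.sum_filter, Finset.sum_product_right]
  refine Finset.sum_congr rfl fun β _ => ?_
  dsimp only
  rw [← Finset.sum_filter, Finset.sum_const]

lemma fiber_sum (s : ℕ) (hs : 0 < s) (μ : Multiset ℕ) (h0 : 0 ∉ μ) (r : ℕ)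
    (hr : r = 0 ∨ r ∈ μ) :
    ∑ p ∈ (Finset.univ ×ˢ AA n μ).filter (fun p => p.2 p.1 = r),
        monomial (p.2 + Finsupp.single p.1 s) (1:F)
      = (Multiset.count (r + s) ((r+s) ::ₘ μ.erase r)) • MM F n ((r+s) ::ₘ μ.erase r) := by
  have step1 : ∑ p ∈ (Finset.univ ×ˢ AA n μ).filter (fun p => p.2 p.1 = r),
        monomial (p.2 + Finsupp.single p.1 s) (1:F)
      = ∑ p ∈ (Finset.univ ×ˢ AA n ((r+s) ::ₘ μ.erase r)).filter (fun p => p.2 p.1 = r + s),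
        monomial p.2 (1:F) := by
    refine Finset.sum_bij' (fun p _ => (p.1, p.2 + Finsupp.single p.1 s))
      (fun p _ => (p.1, p.2 - Finsupp.single p.1 s)) ?_ ?_ ?_ ?_ ?_
    · rintro ⟨i, α⟩ hp
      obtain ⟨hmem, hv⟩ := Finset.mem_filter.mp hp
      obtain ⟨-, hα⟩ := Finset.mem_product.mp hmem
      simp only at hv
      refine Finset.mem_filter.mpr ⟨Finset.mem_product.mpr ⟨Finset.mem_univ _, ?_⟩, by simp [hv]⟩
      rw [mem_AA]
      rw [show ((r+s) ::ₘ μ.erase r) = (α i + s) ::ₘ μ.erase (α i) by rw [hv]]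
      exact add_single_expP hs (mem_AA.mp hα) h0 i
    · rintro ⟨i, β⟩ hp
      obtain ⟨hmem, hv⟩ := Finset.mem_filter.mp hp
      obtain ⟨-, hβ⟩ := Finset.mem_product.mp hmem
      simp only at hv
      refine Finset.mem_filter.mpr ⟨Finset.mem_product.mpr ⟨Finset.mem_univ _, ?_⟩, ?_⟩
      · rw [mem_AA]
        exact sub_single_expP hs (mem_AA.mp hβ) rfl hr h0 i hv
      · simp only [Finsupp.tsub_apply, Finsupp.single_eq_same, hv]
        omega
    · rintro ⟨i, α⟩ _
      simp only [Prod.mk.injEq]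
      refine ⟨trivial, ?_⟩
      ext j
      rw [Finsupp.tsub_apply, Finsupp.add_apply, Finsupp.single_apply]
      split <;> omega
    · rintro ⟨i, β⟩ hp
      obtain ⟨hmem, hv⟩ := Finset.mem_filter.mp hp
      simp only at hv
      simp only [Prod.mk.injEq]
      refine ⟨trivial, ?_⟩
      ext j
      rcases eq_or_ne i j with rfl | h
      · rw [Finsupp.add_apply, Finsupp.tsub_apply, Finsupp.single_eq_same]
        omega
      · rw [Finsupp.add_apply, Finsupp.tsub_apply, Finsupp.single_apply, if_neg h]
        omega
    · rintro ⟨i, α⟩ _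
      rfl
  rw [step1, pairsum _ _ (fun β => monomial β (1:F)), MM, Finset.smul_sum]
  refine Finset.sum_congr rfl fun β hβ => ?_
  rw [card_filter_eq_count β (r+s) (by omega), mem_AA.mp hβ]

lemma key (s : ℕ) (hs : 0 < s) (μ : Multiset ℕ) (h0 : 0 ∉ μ) :
    psum (Fin n) F s * MM F n μ
      = ∑ r ∈ insert 0 μ.toFinset,
          (Multiset.count (r + s) ((r+s) ::ₘ μ.erase r)) • MM F n ((r+s) ::ₘ μ.erase r) := by
  have hmaps : ∀ p ∈ Finset.univ ×ˢ AA n μ, p.2 p.1 ∈ insert 0 μ.toFinset := by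
    rintro ⟨i, α⟩ hp
    obtain ⟨-, hα⟩ := Finset.mem_product.mp hp
    simp only
    rcases Nat.eq_zero_or_pos (α i) with h | h
    · rw [h]; exact Finset.mem_insert_self _ _
    · refine Finset.mem_insert_of_mem (Multiset.mem_toFinset.mpr ?_)
      rw [← mem_AA.mp hα]
      exact Multiset.mem_filter.mpr ⟨Multiset.mem_map.mpr ⟨i, by simp, rfl⟩, h⟩
  have expand : psum (Fin n) F s * MM F n μ
      = ∑ p ∈ Finset.univ ×ˢ AA n μ, monomial (p.2 + Finsupp.single p.1 s) (1:F) := by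
    rw [psum, MM, Finset.sum_mul_sum, ← Finset.sum_product']
    refine Finset.sum_congr rfl fun p _ => ?_
    rw [X_pow_eq_monomial, monomial_mul, one_mul, add_comm]
  rw [expand, ← Finset.sum_fiberwise_of_maps_to hmaps]
  refine Finset.sum_congr rfl fun r hr => ?_
  refine fiber_sum s hs μ h0 r ?_
  rcases Finset.mem_insert.mp hr with h | h
  · exact Or.inl h
  · exact Or.inr (Multiset.mem_toFinset.mp h)

lemma esymm_eq_zero' (k : ℕ) (hk : n < k) : esymm (Fin n) F k = 0 := by
  rw [esymm]
  have h : (Finset.univ : Finset (Fin n)).powersetCard k = ∅ :=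
    Finset.powersetCard_eq_empty.mpr (by simpa using hk)
  rw [h, Finset.sum_empty]

lemma psum_rec (a : ℕ) (ha : n < a) :
    psum (Fin n) F a = ∑ j ∈ Finset.Icc 1 n,
      (-1 : MvPolynomial (Fin n) F)^(j+1) * esymm (Fin n) F j * psum (Fin n) F (a - j) := by
  have h0 : 0 < a := by omega
  have hN := psum_eq_mul_esymm_sub_sum (Fin n) F a h0
  rw [esymm_eq_zero' a (by simpa using ha)] at hN
  have hsum : ∑ p ∈ (Finset.HasAntidiagonal.antidiagonal a).filter (fun p => p.1 ∈ Set.Ioo 0 a),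
      (-1 : MvPolynomial (Fin n) F)^p.1 * esymm (Fin n) F p.1 * psum (Fin n) F p.2
      = ∑ j ∈ Finset.Icc 1 n,
        (-1 : MvPolynomial (Fin n) F)^j * esymm (Fin n) F j * psum (Fin n) F (a - j) := by
    have hss : Finset.Icc 1 n ⊆ Finset.range (a + 1) := fun x hx => Finset.mem_range.mpr
      (by obtain ⟨h1, h2⟩ := Finset.mem_Icc.mp hx; omega)
    rw [Finset.sum_filter, Finset.Nat.sum_antidiagonal_eq_sum_range_succ_mk]
    rw [← Finset.sum_subset hss ?_]
    · refine Finset.sum_congr rfl fun j hj => ?_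
      obtain ⟨hj1, hj2⟩ := Finset.mem_Icc.mp hj
      rw [if_pos]
      exact Set.mem_Ioo.mpr ⟨by omega, by omega⟩
    · intro x hx hx'
      rcases Nat.eq_zero_or_pos x with rfl | hxpos
      · rw [if_neg]
        intro hmem
        exact absurd (Set.mem_Ioo.mp hmem).1 (by omega)
      · have hxn : n < x := by
          by_contra hle
          exact hx' (Finset.mem_Icc.mpr ⟨hxpos, by omega⟩)
        split_ifs
        · rw [esymm_eq_zero' x hxn, mul_zero, zero_mul]
        · rfl
  rw [hsum] at hN
  rw [hN, mul_zero, zero_sub, ← Finset.sum_neg_distrib]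
  exact Finset.sum_congr rfl fun j _ => by ring

lemma AA_singleton (a : ℕ) (ha : 0 < a) :
    AA n {a} = Finset.univ.image (fun i : Fin n => Finsupp.single i a) := by
  ext α
  rw [mem_AA, Finset.mem_image]
  constructor
  · intro h
    have hfm : expP α = Multiset.map α (Finset.univ.val.filter fun i => 0 < α i) := by
      rw [expP, Multiset.filter_map]
      rfl
    have hcard : Multiset.card (Finset.univ.val.filter fun i => 0 < α i) = 1 := by
      have := congrArg Multiset.card (hfm.symm.trans h)
      simpa using this
    obtain ⟨i, hi⟩ := Multiset.card_eq_one.mp hcard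
    have hαi : α i = a := by
      have := hfm.symm.trans h
      rw [hi, Multiset.map_singleton] at this
      exact Multiset.singleton_inj.mp this
    refine ⟨i, Finset.mem_univ _, ?_⟩
    ext j
    rcases eq_or_ne i j with rfl | hj
    · rw [Finsupp.single_eq_same, hαi]
    · rw [Finsupp.single_apply, if_neg hj]
      by_contra hc
      have hjm : j ∈ Finset.univ.val.filter fun i => 0 < α i :=
        Multiset.mem_filter.mpr ⟨by simp, by omega⟩
      rw [hi, Multiset.mem_singleton] at hjm
      exact hj hjm.symm
  · rintro ⟨i, -, rfl⟩
    rw [expP_eq _ i, Finsupp.single_eq_same, if_pos ha]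
    have : epe (Finsupp.single i a) i = 0 := by
      rw [epe, Multiset.filter_eq_nil.mpr ?_]
      intro x hx
      obtain ⟨j, hj, rfl⟩ := Multiset.mem_map.mp hx
      have hji : j ≠ i := (Multiset.Nodup.mem_erase_iff Finset.univ.nodup |>.mp hj).1
      rw [Finsupp.single_apply, if_neg (fun h => hji h.symm)]
      omega
    rw [this]
    rfl

lemma MM_singleton (a : ℕ) (ha : 0 < a) : MM F n {a} = psum (Fin n) F a := by
  rw [MM, AA_singleton a ha, psum]
  rw [Finset.sum_image (fun i _ j _ h => by
    exact Finsupp.single_left_injective (by omega) h)]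
  exact Finset.sum_congr rfl fun i _ => (X_pow_eq_monomial).symm

variable (F n) in
/-- power sums in the symmetric subalgebra -/
noncomputable def pS (a : ℕ) : symmetricSubalgebra (Fin n) F :=
  ⟨psum (Fin n) F a, psum_isSymmetric _ _ a⟩

variable (F n) in
/-- elementary symmetric polynomials in the symmetric subalgebra -/
noncomputable def eS (j : ℕ) : symmetricSubalgebra (Fin n) F :=
  ⟨esymm (Fin n) F j, esymm_isSymmetric _ _ j⟩

lemma pS_rec (a : ℕ) (ha : n < a) :
    pS F n a = ∑ j ∈ Finset.Icc 1 n, (-1)^(j+1) * eS F n j * pS F n (a - j) := by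
  apply Subtype.ext
  rw [AddSubmonoidClass.coe_finset_sum]
  show psum (Fin n) F a = _
  rw [psum_rec a ha]
  refine Finset.sum_congr rfl fun j _ => ?_
  push_cast
  rfl

lemma pS_mem (d : ℕ) (a : ℕ) (ha : d + 1 ≤ a) :
    pS F n a ∈ Ideal.span ((fun j => pS F n (d + j)) '' Set.Icc 1 n) := by
  induction a using Nat.strong_induction_on with
  | _ a ih =>
    rcases le_or_gt a (d + n) with h | h
    · refine Ideal.subset_span ?_
      refine ⟨a - d, ⟨by omega, by omega⟩, ?_⟩
      show pS F n (d + (a - d)) = pS F n a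
      congr 1
      omega
    · rw [pS_rec a (by omega)]
      refine Ideal.sum_mem _ fun j hj => ?_
      obtain ⟨hj1, hj2⟩ := Finset.mem_Icc.mp hj
      exact Ideal.mul_mem_left _ _ (ih (a - j) (by omega) (by omega))

lemma mSymS_eq_pS (a : ℕ) (ha : 0 < a) : mSymS F n {a} = pS F n a := by
  apply Subtype.ext
  show mSym F n {a} = psum (Fin n) F a
  rw [mSym_eq_MM, Multiset.filter_eq_self.mpr (by intro x hx; rw [Multiset.mem_singleton.mp hx]; omega),
    MM_singleton a ha]

lemma main_aux (hn : 0 < n) (d : ℕ) (k : ℕ) :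
    ∀ lam : Multiset ℕ, Multiset.card lam ≤ k → IsPartition n lam →
      d + 1 ≤ leadingPart lam → (leadingMult lam : F) ≠ 0 →
      mSymS F n lam ∈ Ideal.span ((fun j => pS F n (d + j)) '' Set.Icc 1 n) := by
  induction k with
  | zero =>
      intro lam hcard hpart hlp hlm
      exfalso
      have : lam = 0 := Multiset.card_eq_zero.mp (by omega)
      rw [this] at hlp
      simp [leadingPart] at hlp
  | succ k ih =>
      intro lam hcard hpart hlp hlm
      set s := lam.sup with hs
      have hlp' : d + 1 ≤ s := hlp
      have hcount : Multiset.count s lam ≠ 0 := by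
        intro h
        exact hlm (by rw [leadingMult, ← hs]; show ((Multiset.count s lam : ℕ) : F) = 0; rw [h]; simp)
      have hsmem : s ∈ lam := Multiset.count_pos.mp (Nat.pos_of_ne_zero hcount)
      have hspos : 0 < s := by omega
      set μ := lam.erase s with hμ
      have hlam_eq : lam = s ::ₘ μ := (Multiset.cons_erase hsmem).symm
      have h0μ : 0 ∉ μ := fun h => by
        have := hpart.1 0 (Multiset.mem_of_mem_erase h); omega
      have hμsup : ∀ x ∈ μ, x ≤ s := fun x hx =>
        Multiset.le_sup (Multiset.mem_of_mem_erase hx)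
      -- key identity
      have hkey := key (F := F) (n := n) s hspos μ h0μ
      have h0nf : (0:ℕ) ∉ μ.toFinset := fun h => h0μ (Multiset.mem_toFinset.mp h)
      rw [Finset.sum_insert h0nf, Multiset.erase_of_notMem h0μ, zero_add, ← hlam_eq] at hkey
      have hcnt : ∀ r ∈ μ.toFinset,
          Multiset.count (r + s) ((r+s) ::ₘ μ.erase r) = 1 := by
        intro r hr
        have hrμ : r ∈ μ := Multiset.mem_toFinset.mp hr
        have hrpos : 0 < r := by
          rcases Nat.eq_zero_or_pos r with h' | h'
          · exact absurd (h' ▸ hrμ) h0μ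
          · exact h'
        rw [Multiset.count_cons_self]
        have : Multiset.count (r+s) (μ.erase r) = 0 := Multiset.count_eq_zero.mpr (fun h => by
          have := hμsup _ (Multiset.mem_of_mem_erase h)
          omega)
        omega
      have hkey' : psum (Fin n) F s * MM F n μ
          = Multiset.count s lam • MM F n lam
            + ∑ r ∈ μ.toFinset, MM F n ((r+s) ::ₘ μ.erase r) := by
        rw [hkey]
        congr 1
        refine Finset.sum_congr rfl fun r hr => ?_
        rw [hcnt r hr, one_smul]
      -- lift to the subalgebra
      have hposμ : ∀ x ∈ μ, 0 < x := fun x hx => hpart.1 x (Multiset.mem_of_mem_erase hx)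
      have hposν : ∀ r ∈ μ.toFinset, ∀ x ∈ (r+s) ::ₘ μ.erase r, 0 < x := by
        intro r hr x hx
        rcases Multiset.mem_cons.mp hx with rfl | h
        · omega
        · exact hposμ _ (Multiset.mem_of_mem_erase h)
      have hsub : (Multiset.count s lam) • mSymS F n lam
          = pS F n s * mSymS F n μ
            - ∑ r ∈ μ.toFinset, mSymS F n ((r+s) ::ₘ μ.erase r) := by
        apply Subtype.ext
        push_cast
        show (Multiset.count s lam) • mSym F n lam
          = psum (Fin n) F s * mSym F n μ - _
        have hc1 : mSym F n lam = MM F n lam := by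
          rw [mSym_eq_MM, Multiset.filter_eq_self.mpr hpart.1]
        have hc2 : mSym F n μ = MM F n μ := by
          rw [mSym_eq_MM, Multiset.filter_eq_self.mpr hposμ]
        rw [hc1, hc2]
        have : ∑ r ∈ μ.toFinset, ((mSymS F n ((r+s) ::ₘ μ.erase r) :
            symmetricSubalgebra (Fin n) F) : MvPolynomial (Fin n) F)
            = ∑ r ∈ μ.toFinset, MM F n ((r+s) ::ₘ μ.erase r) := by
          refine Finset.sum_congr rfl fun r hr => ?_
          show mSym F n _ = _
          rw [mSym_eq_MM, Multiset.filter_eq_self.mpr (hposν r hr)]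
        rw [this, hkey', add_sub_cancel_right]
      have hlmF : ((Multiset.count s lam : ℕ) : F) ≠ 0 := hlm
      have hfin : mSymS F n lam = ((Multiset.count s lam : ℕ) : F)⁻¹ •
          (pS F n s * mSymS F n μ
            - ∑ r ∈ μ.toFinset, mSymS F n ((r+s) ::ₘ μ.erase r)) := by
        rw [← hsub, ← Nat.cast_smul_eq_nsmul F, inv_smul_smul₀ hlmF]
      rw [hfin]
      refine Submodule.smul_of_tower_mem _ _ ?_
      refine Ideal.sub_mem _ ?_ ?_
      · exact Ideal.mul_mem_right _ _ (pS_mem d s hlp')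
      · refine Ideal.sum_mem _ fun r hr => ?_
        have hrμ : r ∈ μ := Multiset.mem_toFinset.mp hr
        have hcards : Multiset.card lam = Multiset.card μ + 1 := by
          rw [hlam_eq]; simp
        have hcardν : Multiset.card ((r+s) ::ₘ μ.erase r) = Multiset.card μ := by
          rw [Multiset.card_cons, Multiset.card_erase_of_mem hrμ, Nat.pred_eq_sub_one]
          have : 0 < Multiset.card μ := Multiset.card_pos_iff_exists_mem.mpr ⟨r, hrμ⟩
          omega
        have hcardlam : Multiset.card lam ≤ n := hpart.2
        have hsupν : ((r+s) ::ₘ μ.erase r).sup = r + s := by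
          rw [Multiset.sup_cons]
          refine sup_eq_left.mpr ?_
          refine Multiset.sup_le.mpr fun b hb => ?_
          have := hμsup b (Multiset.mem_of_mem_erase hb)
          omega
        refine ih _ (by omega) ⟨hposν r hr, by omega⟩ ?_ ?_
        · rw [leadingPart, hsupν]
          omega
        · rw [leadingMult, hsupν, hcnt r hr]
          simp

end AR

/-- Adem–Reichstein: the ideal `I = (m_{(d+1)}, …, m_{(d+n)})` generated by
the power sums of degrees `d+1, …, d+n` contains every `m_λ` with `lp(λ) ≥ d+1` and
`lm(λ)` invertible in `F`. -/
theorem mSymS_mem_span_powerSums (F : Type*) [Field F] (n : ℕ) (hn : 0 < n) (d : ℕ)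
    (lam : Multiset ℕ) (hlam : IsPartition n lam)
    (hlp : d + 1 ≤ leadingPart lam) (hlm : (leadingMult lam : F) ≠ 0) :
    mSymS F n lam ∈
      Ideal.span ((fun j => mSymS F n {d + j}) '' Set.Icc 1 n) := by
  have hgen : (fun j => mSymS F n {d + j}) '' Set.Icc 1 n
      = (fun j => AR.pS F n (d + j)) '' Set.Icc 1 n := by
    refine Set.image_congr fun j hj => ?_
    exact AR.mSymS_eq_pS (d + j) (by have := hj.1; omega)
  rw [hgen]
  exact AR.main_aux hn d (Multiset.card lam) lam le_rfl hlam hlp hlm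
end

section
/- Let F be a field of characteristic p, n a positive integer, and d a nonnegative integer. If p = 0 or n < p, then I_{n,d} = (m_{(d+1)}, m_{(d+2)}, ..., m_{(d+n)}), the ideal of F[x_1,...,x_n]^{S_n} generated by the power sums of degrees d+1 through d+n. -/
open MvPolynomial

set_option synthInstance.maxHeartbeats 1000000
set_option maxHeartbeats 1600000

namespace CKW

variable {F : Type*} [Field F] {n : ℕ}

/-- The multiset of positive values of an exponent vector. -/
def typeOf {n : ℕ} (g : Fin n →₀ ℕ) : Multiset ℕ :=
  (Multiset.map g Finset.univ.val).filter (fun x => 0 < x)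

lemma typeOf_def (g : Fin n →₀ ℕ) :
    typeOf g = Multiset.filter (fun x => 0 < x) (Multiset.map g Finset.univ.val) := rfl

lemma typeOf_pos {g : Fin n →₀ ℕ} {a : ℕ} (ha : a ∈ typeOf g) : 0 < a :=
  (Multiset.mem_filter.mp ha).2

lemma mem_typeOf {g : Fin n →₀ ℕ} {a : ℕ} :
    a ∈ typeOf g ↔ (∃ i, g i = a) ∧ 0 < a := by
  rw [typeOf_def, Multiset.mem_filter, Multiset.mem_map]
  simp only [Finset.mem_val, Finset.mem_univ, true_and]

lemma typeOf_card_le (g : Fin n →₀ ℕ) : Multiset.card (typeOf g) ≤ n := by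
  calc Multiset.card (typeOf g) ≤ Multiset.card (Multiset.map g Finset.univ.val) :=
        Multiset.card_le_card (Multiset.filter_le _ _)
    _ = n := by simp

lemma sum_nonpos_filter (f : Fin n →₀ ℕ) :
    (Multiset.filter (fun a => ¬ 0 < a) (Multiset.map f Finset.univ.val)).sum = 0 := by
  apply Multiset.sum_eq_zero
  intro x hx
  have := (Multiset.mem_filter.mp hx).2
  omega

lemma typeOf_sum (g : Fin n →₀ ℕ) : (typeOf g).sum = ∑ i, g i := by
  have h1 := Multiset.filter_add_not (fun x => 0 < x) (Multiset.map g Finset.univ.val)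
  have h2 := sum_nonpos_filter g
  have h3 := congrArg Multiset.sum h1
  rw [Multiset.sum_add, h2, add_zero] at h3
  rw [typeOf_def, h3, Finset.sum]

lemma map_univ_key (f : Fin n →₀ ℕ) :
    Multiset.map f Finset.univ.val =
      typeOf f + Multiset.replicate (n - Multiset.card (typeOf f)) 0 := by
  have h1 := Multiset.filter_add_not (fun x => 0 < x) (Multiset.map f Finset.univ.val)
  have h2 : Multiset.filter (fun a => ¬ 0 < a) (Multiset.map f Finset.univ.val)
      = Multiset.replicate (n - Multiset.card (typeOf f)) 0 := by
    rw [Multiset.eq_replicate]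
    constructor
    · have hcongr := congrArg Multiset.card h1
      simp only [Multiset.card_add] at hcongr
      have hn : Multiset.card (Multiset.map (⇑f) Finset.univ.val) = n := by simp
      rw [hn, ← typeOf_def] at hcongr
      omega
    · intro b hb
      have := (Multiset.mem_filter.mp hb).2
      omega
  conv_lhs => rw [← h1]
  rw [h2, typeOf_def]

lemma map_univ_eq_of_typeOf_eq {g g' : Fin n →₀ ℕ} (h : typeOf g = typeOf g') :
    Multiset.map g Finset.univ.val = Multiset.map g' Finset.univ.val := by
  rw [map_univ_key g, map_univ_key g', h]

/-- A nonempty multiset of naturals contains its sup. -/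
lemma sup_mem {ρ : Multiset ℕ} (h : ρ ≠ 0) : ρ.sup ∈ ρ := by
  induction ρ using Multiset.induction with
  | empty => exact absurd rfl h
  | cons a t ih =>
    rcases eq_or_ne t 0 with rfl | ht
    · simp
    · rw [Multiset.sup_cons]
      rcases le_total a t.sup with hle | hle
      · rw [sup_eq_right.mpr hle]
        exact Multiset.mem_cons_of_mem (ih ht)
      · rw [sup_eq_left.mpr hle]
        exact Multiset.mem_cons_self _ _


/-- Two functions with the same multiset of values differ by a permutation. -/
lemma exists_perm {g g' : Fin n → ℕ}
    (h : Multiset.map g Finset.univ.val = Multiset.map g' Finset.univ.val) :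
    ∃ e : Equiv.Perm (Fin n), ∀ i, g (e i) = g' i := by
  set σ := Tuple.sort g
  set σ' := Tuple.sort g'
  have hperm : (List.ofFn (g ∘ σ)).Perm (List.ofFn (g' ∘ σ')) := by
    refine (σ.ofFn_comp_perm g).trans ?_
    refine List.Perm.trans ?_ (σ'.ofFn_comp_perm g').symm
    rw [← Multiset.coe_eq_coe]
    have h1 : (↑(List.ofFn g) : Multiset ℕ) = Multiset.map g Finset.univ.val := by
      rw [Fin.univ_val_map]
    have h2 : (↑(List.ofFn g') : Multiset ℕ) = Multiset.map g' Finset.univ.val := by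
      rw [Fin.univ_val_map]
    rw [h1, h2, h]
  have heq : g ∘ σ = g' ∘ σ' :=
    List.ofFn_injective (List.Perm.eq_of_sortedLE
      (Tuple.monotone_sort g).sortedLE_ofFn (Tuple.monotone_sort g').sortedLE_ofFn hperm)
  refine ⟨σ'.symm.trans σ, fun i => ?_⟩
  have := congrFun heq (σ'.symm i)
  simpa using this

/-- Coefficients of a symmetric polynomial only depend on the type of the exponent. -/
lemma coeff_eq_of_typeOf_eq {P : MvPolynomial (Fin n) F} (hP : P.IsSymmetric)
    {g g' : Fin n →₀ ℕ} (h : typeOf g = typeOf g') :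
    coeff g P = coeff g' P := by
  obtain ⟨e, he⟩ := exists_perm (map_univ_eq_of_typeOf_eq h)
  have hmap : Finsupp.mapDomain (⇑e) g' = g := by
    ext j
    have : j = e (e.symm j) := (e.apply_symm_apply j).symm
    rw [this, Finsupp.mapDomain_apply e.injective, ← he]
  calc coeff g P = coeff (Finsupp.mapDomain (⇑e) g') (rename (⇑e) P) := by rw [hP e, hmap]
    _ = coeff g' P := coeff_rename_mapDomain _ e.injective _ _

/-- The finset of exponent vectors of a given type. -/
noncomputable def T (n : ℕ) (lam : Multiset ℕ) : Finset (Fin n →₀ ℕ) :=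
  (Finset.finsuppAntidiag Finset.univ lam.sum).filter (fun g => typeOf g = lam)

lemma mem_T {lam : Multiset ℕ} {g : Fin n →₀ ℕ} : g ∈ T n lam ↔ typeOf g = lam := by
  rw [T, Finset.mem_filter, Finset.mem_finsuppAntidiag]
  constructor
  · exact fun h => h.2
  · intro h
    refine ⟨⟨?_, fun x _ => Finset.mem_univ x⟩, h⟩
    rw [← h, typeOf_sum]

variable (F) in
/-- The monomial symmetric polynomial attached to a multiset of positive naturals. -/
noncomputable def M (n : ℕ) (lam : Multiset ℕ) : MvPolynomial (Fin n) F :=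
  ∑ g ∈ T n lam, monomial g 1

lemma coeff_M (lam : Multiset ℕ) (g : Fin n →₀ ℕ) :
    coeff g (M F n lam) = if typeOf g = lam then 1 else 0 := by
  rw [M]
  rw [MvPolynomial.coeff_sum]
  simp only [coeff_monomial]
  rw [Finset.sum_ite_eq' (T n lam) g (fun _ => (1:F))]
  by_cases h : typeOf g = lam
  · rw [if_pos (mem_T.mpr h), if_pos h]
  · rw [if_neg (fun hc => h (mem_T.mp hc)), if_neg h]


lemma typeOf_mapDomain (e : Equiv.Perm (Fin n)) (g : Fin n →₀ ℕ) :
    typeOf (Finsupp.mapDomain (⇑e) g) = typeOf g := by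
  have hfun : ⇑(Finsupp.mapDomain (⇑e) g) = ⇑g ∘ ⇑e.symm := by
    funext j
    have : j = e (e.symm j) := (e.apply_symm_apply j).symm
    conv_lhs => rw [this, Finsupp.mapDomain_apply e.injective]
    rfl
  rw [typeOf_def, typeOf_def, hfun]
  have : Multiset.map (⇑g ∘ ⇑e.symm) Finset.univ.val
      = Multiset.map ⇑g (Multiset.map ⇑e.symm Finset.univ.val) := by
    rw [Multiset.map_map]
  rw [this, Multiset.map_univ_val_equiv]

lemma M_isSymmetric (lam : Multiset ℕ) : (M F n lam).IsSymmetric := by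
  intro e
  rw [M, map_sum]
  simp only [rename_monomial]
  refine Finset.sum_nbij' (fun g => Finsupp.mapDomain (⇑e) g)
    (fun g => Finsupp.mapDomain (⇑e.symm) g) ?_ ?_ ?_ ?_ ?_
  · intro g hg
    rw [mem_T, typeOf_mapDomain]
    exact mem_T.mp hg
  · intro g hg
    rw [mem_T, typeOf_mapDomain]
    exact mem_T.mp hg
  · intro g _
    simp only [← Finsupp.mapDomain_comp]
    simp
  · intro g _
    simp only [← Finsupp.mapDomain_comp]
    simp
  · intro g _
    rfl


variable (F n) in
/-- `M` as an element of the symmetric subalgebra. -/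
noncomputable def MS (lam : Multiset ℕ) : symmetricSubalgebra (Fin n) F :=
  ⟨M F n lam, (mem_symmetricSubalgebra _).mpr (M_isSymmetric lam)⟩

lemma val_smul (c : F) (x : symmetricSubalgebra (Fin n) F) :
    ((c • x : symmetricSubalgebra (Fin n) F) : MvPolynomial (Fin n) F) = c • (x : MvPolynomial (Fin n) F) := rfl

/-- Every symmetric polynomial is an `F`-linear combination of the `MS ρ` for
`ρ` ranging over the types of its support. -/
lemma mem_span_MS (Φ : Multiset ℕ → Prop) :
    ∀ (k : ℕ) (P : symmetricSubalgebra (Fin n) F),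
      (P : MvPolynomial (Fin n) F).support.card ≤ k →
      (∀ g ∈ (P : MvPolynomial (Fin n) F).support, Φ (typeOf g)) →
      P ∈ Submodule.span F (MS F n '' {ρ | Φ ρ}) := by
  intro k
  induction k with
  | zero =>
    intro P hcard _
    have : (P : MvPolynomial (Fin n) F) = 0 := by
      rwa [Nat.le_zero, Finset.card_eq_zero, MvPolynomial.support_eq_empty] at hcard
    have hP : P = 0 := Subtype.ext (by rw [this]; rfl)
    rw [hP]
    exact Submodule.zero_mem _
  | succ k ih =>
    intro P hcard hΦ
    rcases Finset.eq_empty_or_nonempty (P : MvPolynomial (Fin n) F).support with he | ⟨g, hg⟩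
    · have h0 : (P : MvPolynomial (Fin n) F) = 0 := MvPolynomial.support_eq_empty.mp he
      have hP : P = 0 := Subtype.ext (by rw [h0]; rfl)
      rw [hP]
      exact Submodule.zero_mem _
    · set lam := typeOf g with hlam
      set c := coeff g (P : MvPolynomial (Fin n) F) with hc
      set P' := P - c • MS F n lam with hP'
      have hPsym : (P : MvPolynomial (Fin n) F).IsSymmetric :=
        (mem_symmetricSubalgebra _).mp P.2
      have hcoeff : ∀ g', coeff g' (P' : MvPolynomial (Fin n) F)
          = coeff g' (P : MvPolynomial (Fin n) F) - (if typeOf g' = lam then c else 0) := by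
        intro g'
        rw [hP']
        push_cast [AddSubgroupClass.coe_sub, val_smul]
        rw [coeff_sub, MvPolynomial.coeff_smul]
        have : ((MS F n lam : symmetricSubalgebra (Fin n) F) : MvPolynomial (Fin n) F)
            = M F n lam := rfl
        rw [this, coeff_M]
        by_cases h : typeOf g' = lam <;> simp [h]
      have hsub : (P' : MvPolynomial (Fin n) F).support ⊆
          (P : MvPolynomial (Fin n) F).support.erase g := by
        intro g' hg'
        rw [MvPolynomial.mem_support_iff] at hg'
        rw [hcoeff g'] at hg'
        by_cases h : typeOf g' = lam
        · exfalso
          apply hg'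
          rw [if_pos h, coeff_eq_of_typeOf_eq hPsym h, ← hc, sub_self]
        · rw [if_neg h, sub_zero] at hg'
          apply Finset.mem_erase.mpr
          refine ⟨?_, MvPolynomial.mem_support_iff.mpr hg'⟩
          intro hgg
          exact h (by rw [hgg])
      have hcard' : (P' : MvPolynomial (Fin n) F).support.card ≤ k := by
        have h1 := Finset.card_le_card hsub
        have h2 : ((P : MvPolynomial (Fin n) F).support.erase g).card
            = (P : MvPolynomial (Fin n) F).support.card - 1 := Finset.card_erase_of_mem hg
        omega
      have hΦ' : ∀ g' ∈ (P' : MvPolynomial (Fin n) F).support, Φ (typeOf g') :=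
        fun g' hg' => hΦ g' (Finset.mem_of_mem_erase (hsub hg'))
      have hMS : MS F n lam ∈ Submodule.span F (MS F n '' {ρ | Φ ρ}) :=
        Submodule.subset_span ⟨lam, hΦ g hg, rfl⟩
      have : P = P' + c • MS F n lam := by rw [hP']; ring
      rw [this]
      exact Submodule.add_mem _ (ih P' hcard' hΦ') (Submodule.smul_mem _ _ hMS)


/-- The rest of the values of `g`, away from coordinate `i`. -/
def restOf (g : Fin n →₀ ℕ) (i : Fin n) : Multiset ℕ :=
  (Multiset.map g (Finset.univ.erase i).val).filter (fun x => 0 < x)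

lemma typeOf_eq_cons_restOf (g : Fin n →₀ ℕ) (i : Fin n) (h : 0 < g i) :
    typeOf g = g i ::ₘ restOf g i := by
  rw [typeOf_def, restOf]
  have huniv : (Finset.univ : Finset (Fin n)).val = i ::ₘ (Finset.univ.erase i).val := by
    rw [← Finset.insert_val_of_notMem (Finset.notMem_erase i _),
      Finset.insert_erase (Finset.mem_univ i)]
  rw [huniv, Multiset.map_cons, Multiset.filter_cons_of_pos _ h]

lemma typeOf_eq_restOf (g : Fin n →₀ ℕ) (i : Fin n) (h : g i = 0) :
    typeOf g = restOf g i := by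
  rw [typeOf_def, restOf]
  have huniv : (Finset.univ : Finset (Fin n)).val = i ::ₘ (Finset.univ.erase i).val := by
    rw [← Finset.insert_val_of_notMem (Finset.notMem_erase i _),
      Finset.insert_erase (Finset.mem_univ i)]
  rw [huniv, Multiset.map_cons, Multiset.filter_cons_of_neg]
  rw [h]
  simp

lemma restOf_congr {g g' : Fin n →₀ ℕ} (i : Fin n) (h : ∀ j, j ≠ i → g j = g' j) :
    restOf g i = restOf g' i := by
  rw [restOf, restOf]
  congr 1
  apply Multiset.map_congr rfl
  intro j hj
  exact h j (Finset.ne_of_mem_erase (Finset.mem_val.mp hj))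

lemma sub_single_apply (g : Fin n →₀ ℕ) (i : Fin n) (s : ℕ) (j : Fin n) :
    (g - Finsupp.single i s) j = g j - Finsupp.single i s j := Finsupp.tsub_apply _ _ _

/-- The coefficient of `psum s * M μ`. -/
lemma coeff_psum_mul (s : ℕ) (μ : Multiset ℕ) (g : Fin n →₀ ℕ) :
    coeff g (psum (Fin n) F s * M F n μ)
      = ((Finset.univ.filter
          (fun i : Fin n => s ≤ g i ∧ typeOf (g - Finsupp.single i s) = μ)).card : F) := by
  rw [psum, Finset.sum_mul, MvPolynomial.coeff_sum]
  have hterm : ∀ i : Fin n, coeff g ((X i : MvPolynomial (Fin n) F) ^ s * M F n μ)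
      = if s ≤ g i ∧ typeOf (g - Finsupp.single i s) = μ then (1 : F) else 0 := by
    intro i
    rw [X_pow_eq_monomial, coeff_monomial_mul', coeff_M]
    have hle : ((Finsupp.single i s) ≤ g) ↔ s ≤ g i := Finsupp.single_le_iff
    by_cases h1 : s ≤ g i
    · by_cases h2 : typeOf (g - Finsupp.single i s) = μ
      · rw [if_pos (hle.mpr h1), if_pos h2, if_pos ⟨h1, h2⟩, one_mul]
      · rw [if_pos (hle.mpr h1), if_neg h2, if_neg (fun hc => h2 hc.2), mul_zero]
    · rw [if_neg (fun hc => h1 (hle.mp hc)), if_neg (fun hc => h1 hc.1)]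
  rw [Finset.sum_congr rfl (fun i _ => hterm i)]
  rw [Finset.sum_boole]


/-- C1: at an exponent of type `s ::ₘ μ` (with `s` maximal), the coefficient of
`psum s * M μ` is the multiplicity of `s`. -/
lemma coeff_psum_mul_of_type_eq {s : ℕ} (hs : 0 < s) {μ : Multiset ℕ} (hmax : ∀ a ∈ μ, a ≤ s)
    {g : Fin n →₀ ℕ} (hg : typeOf g = s ::ₘ μ) :
    coeff g (psum (Fin n) F s * M F n μ) = (Multiset.count s (s ::ₘ μ) : F) := by
  rw [coeff_psum_mul]
  congr 1
  have hset : Finset.univ.filter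
      (fun i : Fin n => s ≤ g i ∧ typeOf (g - Finsupp.single i s) = μ)
      = Finset.univ.filter (fun i : Fin n => g i = s) := by
    apply Finset.filter_congr
    intro i _
    constructor
    · rintro ⟨h1, h2⟩
      by_contra hne
      have hgi : s < g i := lt_of_le_of_ne h1 (fun hc => hne hc.symm)
      -- g i = s + r with r > 0
      have hsub : (g - Finsupp.single i s) i = g i - s := by
        rw [sub_single_apply, Finsupp.single_eq_same]
      have hr : 0 < g i - s := by omega
      have hrest : restOf (g - Finsupp.single i s) i = restOf g i := by
        apply restOf_congr
        intro j hj
        rw [sub_single_apply, Finsupp.single_eq_of_ne' (fun hc => hj hc.symm), Nat.sub_zero]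
      have htg : typeOf g = g i ::ₘ restOf g i := typeOf_eq_cons_restOf g i (by omega)
      have htg' : typeOf (g - Finsupp.single i s) = (g i - s) ::ₘ restOf g i := by
        rw [typeOf_eq_cons_restOf _ i (by rw [hsub]; exact hr), hsub, hrest]
      -- now g i ∈ typeOf g = s ::ₘ μ but g i > s and all elements are ≤ s
      have hmem : g i ∈ typeOf g := by rw [htg]; exact Multiset.mem_cons_self _ _
      rw [hg] at hmem
      rcases Multiset.mem_cons.mp hmem with h | h
      · omega
      · have := hmax _ h; omega
    · intro h
      have h1 : s ≤ g i := le_of_eq h.symm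
      refine ⟨h1, ?_⟩
      have hsub : (g - Finsupp.single i s) i = 0 := by
        rw [sub_single_apply, Finsupp.single_eq_same, h, Nat.sub_self]
      have hrest : restOf (g - Finsupp.single i s) i = restOf g i := by
        apply restOf_congr
        intro j hj
        rw [sub_single_apply, Finsupp.single_eq_of_ne' (fun hc => hj hc.symm), Nat.sub_zero]
      rw [typeOf_eq_restOf _ i hsub, hrest]
      have htg : typeOf g = g i ::ₘ restOf g i := typeOf_eq_cons_restOf g i (by omega)
      rw [hg, h] at htg
      exact (Multiset.cons_inj_right s).mp htg.symm
  rw [hset]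
  -- card of fiber = count in map = count in typeOf
  have h1 : (Finset.univ.filter (fun i : Fin n => g i = s)).card
      = Multiset.count s (Multiset.map g Finset.univ.val) := by
    have heq : (Finset.univ.filter (fun i : Fin n => g i = s))
        = (Finset.univ.filter (fun i : Fin n => s = g i)) := by
      apply Finset.filter_congr
      intro i _
      exact eq_comm
    rw [Multiset.count_map, heq]
    rfl
  have h2 : Multiset.count s (Multiset.map g Finset.univ.val) = Multiset.count s (typeOf g) := by
    rw [typeOf_def, Multiset.count_filter, if_pos hs]
  rw [h1, h2, hg]

/-- C2: an exponent in the support of `psum s * M μ` which is not of type `s ::ₘ μ`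
has a part exceeding `s`, and total degree `s + μ.sum`. -/
lemma type_of_support_psum_mul {s : ℕ} (hs : 0 < s) {μ : Multiset ℕ}
    {g : Fin n →₀ ℕ} (hcoeff : coeff g (psum (Fin n) F s * M F n μ) ≠ 0)
    (hne : typeOf g ≠ s ::ₘ μ) :
    (typeOf g).sum = s + μ.sum ∧ ∃ a ∈ typeOf g, s < a := by
  rw [coeff_psum_mul] at hcoeff
  have hcard : (Finset.univ.filter
      (fun i : Fin n => s ≤ g i ∧ typeOf (g - Finsupp.single i s) = μ)).card ≠ 0 := by
    intro hc
    rw [hc] at hcoeff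
    simp at hcoeff
  obtain ⟨i, hi⟩ := Finset.card_pos.mp (Nat.pos_of_ne_zero hcard)
  rw [Finset.mem_filter] at hi
  obtain ⟨-, h1, h2⟩ := hi
  have hsub : (g - Finsupp.single i s) i = g i - s := by
    rw [sub_single_apply, Finsupp.single_eq_same]
  have hrest : restOf (g - Finsupp.single i s) i = restOf g i := by
    apply restOf_congr
    intro j hj
    rw [sub_single_apply, Finsupp.single_eq_of_ne' (fun hc => hj hc.symm), Nat.sub_zero]
  by_cases hr : g i = s
  · exfalso
    apply hne
    have htg : typeOf g = g i ::ₘ restOf g i := typeOf_eq_cons_restOf g i (by omega)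
    have h0 : (g - Finsupp.single i s) i = 0 := by omega
    rw [typeOf_eq_restOf _ i h0, hrest] at h2
    rw [htg, hr, h2]
  · have hgi : s < g i := lt_of_le_of_ne h1 (fun hc => hr hc.symm)
    have htg : typeOf g = g i ::ₘ restOf g i := typeOf_eq_cons_restOf g i (by omega)
    have htg' : typeOf (g - Finsupp.single i s) = (g i - s) ::ₘ restOf g i := by
      rw [typeOf_eq_cons_restOf _ i (by omega), hsub, hrest]
    rw [htg'] at h2
    constructor
    · rw [htg, Multiset.sum_cons, ← h2, Multiset.sum_cons]
      omega
    · exact ⟨g i, by rw [htg]; exact Multiset.mem_cons_self _ _, hgi⟩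


variable (F n) in
/-- Power sum in the symmetric subalgebra. -/
noncomputable def psumS (m : ℕ) : symmetricSubalgebra (Fin n) F :=
  ⟨psum (Fin n) F m, (mem_symmetricSubalgebra _).mpr (psum_isSymmetric _ _ m)⟩

variable (F n) in
/-- Elementary symmetric polynomial in the symmetric subalgebra. -/
noncomputable def eS (k : ℕ) : symmetricSubalgebra (Fin n) F :=
  ⟨esymm (Fin n) F k, (mem_symmetricSubalgebra _).mpr (esymm_isSymmetric _ _ k)⟩

lemma esymm_eq_zero_of_lt (k : ℕ) (hk : n < k) : esymm (Fin n) F k = 0 := by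
  rw [esymm]
  rw [Finset.powersetCard_eq_empty.mpr (by simpa using hk)]
  simp

/-- Newton's identities give membership of all high power sums in the ideal generated
by `psum (d+1), ..., psum (d+n)`. -/
lemma psumS_mem_span (d : ℕ) (hn : 0 < n) :
    ∀ m : ℕ, d + 1 ≤ m →
      psumS F n m ∈ Ideal.span ((fun j => psumS F n (d + j)) '' Set.Icc 1 n) := by
  intro m
  induction m using Nat.strong_induction_on with
  | _ m ih =>
    intro hm
    by_cases hmn : m ≤ d + n
    · have hmd : m = d + (m - d) := by omega
      rw [hmd]
      apply Ideal.subset_span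
      exact ⟨m - d, by simp only [Set.mem_Icc]; omega, rfl⟩
    · push_neg at hmn
      have hnm : n < m := by omega
      have h0 : esymm (Fin n) F m = 0 := esymm_eq_zero_of_lt m hnm
      have key := mul_esymm_eq_sum (Fin n) F m
      rw [h0, mul_zero] at key
      have hS : ∑ a ∈ (Finset.HasAntidiagonal.antidiagonal m).filter (fun a => a.1 < m),
          (-1 : MvPolynomial (Fin n) F) ^ a.1 * esymm (Fin n) F a.1 * psum (Fin n) F a.2
          = 0 := by
        have := congrArg (fun x => (-1 : MvPolynomial (Fin n) F) ^ (m + 1) * x) key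
        simp only [mul_zero] at this
        rw [← mul_assoc, ← pow_add] at this
        have heven : Even ((m + 1) + (m + 1)) := by exact ⟨m + 1, by ring⟩
        rw [heven.neg_one_pow, one_mul] at this
        exact this.symm
      -- split off the a = (0, m) term
      have hmem : ((0 : ℕ), m) ∈ (Finset.HasAntidiagonal.antidiagonal m).filter (fun a => a.1 < m) := by
        simp only [Finset.mem_filter, Finset.HasAntidiagonal.mem_antidiagonal]
        omega
      rw [← Finset.add_sum_erase _ _ hmem] at hS
      simp only [pow_zero, one_mul, esymm_zero] at hS
      -- p_m = - sum of the rest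
      have hpm : psum (Fin n) F m
          = - ∑ a ∈ (((Finset.HasAntidiagonal.antidiagonal m).filter (fun a => a.1 < m)).erase (0, m)),
            (-1 : MvPolynomial (Fin n) F) ^ a.1 * esymm (Fin n) F a.1 * psum (Fin n) F a.2 := by
        exact eq_neg_of_add_eq_zero_left hS
      -- lift to the subalgebra
      have hlift : psumS F n m
          = - ∑ a ∈ (((Finset.HasAntidiagonal.antidiagonal m).filter (fun a => a.1 < m)).erase (0, m)),
            (-1 : symmetricSubalgebra (Fin n) F) ^ a.1 * eS F n a.1 * psumS F n a.2 := by
        apply Subtype.ext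
        push_cast
        exact hpm
      rw [hlift]
      apply neg_mem
      apply Ideal.sum_mem
      intro a ha
      rw [Finset.mem_erase, Finset.mem_filter, Finset.HasAntidiagonal.mem_antidiagonal] at ha
      obtain ⟨hane, hsum, hlt⟩ := ha
      by_cases han : n < a.1
      · have : eS F n a.1 = 0 := Subtype.ext (esymm_eq_zero_of_lt a.1 han)
        rw [this, mul_zero, zero_mul]
        exact Ideal.zero_mem _
      · push_neg at han
        have ha1 : 1 ≤ a.1 := by
          by_contra hc
          push_neg at hc
          apply hane
          have : a.1 = 0 := by omega
          have : a.2 = m := by omega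
          exact Prod.ext (by omega) this
        have h2 : d + 1 ≤ a.2 := by omega
        have h2' : a.2 < m := by omega
        exact Ideal.mul_mem_left _ _ (ih a.2 h2' h2)


lemma cast_ne_zero_of_le (hp : ringChar F = 0 ∨ n < ringChar F) {c : ℕ}
    (h1 : 1 ≤ c) (h2 : c ≤ n) : (c : F) ≠ 0 := by
  intro h
  haveI : CharP F (ringChar F) := ringChar.charP F
  have hdvd : ringChar F ∣ c := (CharP.cast_eq_zero_iff F (ringChar F) c).mp h
  rcases hp with h0 | hlt
  · rw [h0] at hdvd
    have := Nat.eq_zero_of_zero_dvd hdvd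
    omega
  · have := Nat.le_of_dvd (by omega) hdvd
    omega

/-- The main induction: every monomial symmetric polynomial whose leading part
exceeds `d` lies in the power sum ideal. -/
lemma MS_mem_span (d : ℕ) (hn : 0 < n) (hp : ringChar F = 0 ∨ n < ringChar F) :
    ∀ (t : ℕ) (ρ : Multiset ℕ), (∀ a ∈ ρ, 0 < a) → (∃ a ∈ ρ, d + 1 ≤ a) →
      ρ.sum - ρ.sup < t →
      MS F n ρ ∈ Ideal.span ((fun j => psumS F n (d + j)) '' Set.Icc 1 n) := by
  intro t
  induction t with
  | zero => intro ρ _ _ h; omega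
  | succ t ih =>
    intro ρ hpos hbig hmeas
    set J := Ideal.span ((fun j => psumS F n (d + j)) '' Set.Icc 1 n) with hJ
    by_cases hcard : n < Multiset.card ρ
    · have hT : T n ρ = ∅ := by
        rw [Finset.eq_empty_iff_forall_notMem]
        intro g hg
        have h1 := typeOf_card_le g
        rw [mem_T.mp hg] at h1
        omega
      have hM : MS F n ρ = 0 := by
        apply Subtype.ext
        show M F n ρ = 0
        rw [M, hT, Finset.sum_empty]
      rw [hM]
      exact Ideal.zero_mem _
    · push_neg at hcard
      set s := ρ.sup with hs
      have hρne : ρ ≠ 0 := by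
        obtain ⟨a, ha, -⟩ := hbig
        exact fun hc => by simp [hc] at ha
      have hsmem : s ∈ ρ := sup_mem hρne
      have hsd : d + 1 ≤ s := by
        obtain ⟨a, ha, had⟩ := hbig
        exact le_trans had (Multiset.le_sup ha)
      have hs0 : 0 < s := by omega
      set μ := ρ.erase s with hμ
      have hcons : s ::ₘ μ = ρ := Multiset.cons_erase hsmem
      have hmax : ∀ a ∈ μ, a ≤ s := fun a ha =>
        Multiset.le_sup (Multiset.mem_of_mem_erase ha)
      set c := Multiset.count s ρ with hc
      have hc1 : 1 ≤ c := Multiset.count_pos.mpr hsmem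
      have hcn : c ≤ n := le_trans (Multiset.count_le_card s ρ) hcard
      have hcF : ((c : ℕ) : F) ≠ 0 := cast_ne_zero_of_le hp hc1 hcn
      set Q := psumS F n s * MS F n μ - ((c : ℕ) : F) • MS F n ρ with hQ
      have hQval : (Q : MvPolynomial (Fin n) F)
          = psum (Fin n) F s * M F n μ - ((c : ℕ) : F) • M F n ρ := rfl
      have hQmem : Q ∈ J := by
        have hspan := mem_span_MS
          (fun ρ' => (∀ a ∈ ρ', 0 < a) ∧ (∃ a ∈ ρ', d + 1 ≤ a) ∧ ρ'.sum - ρ'.sup < t)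
          (Q : MvPolynomial (Fin n) F).support.card Q le_rfl ?_
        · have hle : Submodule.span F
              (MS F n '' {ρ' | (∀ a ∈ ρ', 0 < a) ∧ (∃ a ∈ ρ', d + 1 ≤ a) ∧ ρ'.sum - ρ'.sup < t})
              ≤ Submodule.restrictScalars F J := by
            rw [Submodule.span_le]
            rintro x ⟨ρ', hρ', rfl⟩
            exact ih ρ' hρ'.1 hρ'.2.1 hρ'.2.2
          exact hle hspan
        · intro g hg
          rw [MvPolynomial.mem_support_iff, hQval, coeff_sub, MvPolynomial.coeff_smul,
            coeff_M] at hg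
          by_cases htype : typeOf g = ρ
          · exfalso
            apply hg
            have hC1 : coeff g (psum (Fin n) F s * M F n μ)
                = (Multiset.count s (s ::ₘ μ) : F) := by
              apply coeff_psum_mul_of_type_eq hs0 hmax
              rw [htype, hcons]
            rw [hC1, if_pos htype, hcons, smul_eq_mul, mul_one, ← hc, sub_self]
          · rw [if_neg htype, smul_eq_mul, mul_zero, sub_zero] at hg
            obtain ⟨hsum, a, ha, hsa⟩ := type_of_support_psum_mul hs0 hg (by rwa [hcons])
            refine ⟨fun b hb => typeOf_pos hb, ⟨a, ha, by omega⟩, ?_⟩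
            -- measure strictly decreases
            have h1 : (typeOf g).sum = ρ.sum := by
              rw [hsum, ← hcons, Multiset.sum_cons]
            have h2 : a ≤ (typeOf g).sup := Multiset.le_sup ha
            have h3 : a ≤ (typeOf g).sum := Multiset.single_le_sum (fun x hx => Nat.zero_le x) a ha
            have h4 : s ≤ ρ.sum := Multiset.single_le_sum (fun x hx => Nat.zero_le x) s hsmem
            omega
      have hpsJ : psumS F n s * MS F n μ ∈ J :=
        Ideal.mul_mem_right _ _ (psumS_mem_span d hn s hsd)
      have hsmulJ : ((c : ℕ) : F) • MS F n ρ ∈ J := by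
        have : ((c : ℕ) : F) • MS F n ρ = psumS F n s * MS F n μ - Q := by
          rw [hQ]; ring
        rw [this]
        exact Submodule.sub_mem _ hpsJ hQmem
      have hfinal : MS F n ρ = ((c : ℕ) : F)⁻¹ • (((c : ℕ) : F) • MS F n ρ) := by
        rw [smul_smul, inv_mul_cancel₀ hcF, one_smul]
      rw [hfinal, Algebra.smul_def]
      exact Ideal.mul_mem_left _ _ hsmulJ


/-- `msymm` of a one-part partition is the power sum. -/
lemma msymm_single_eq_psum (hn : 0 < n) {N : ℕ} (P : Nat.Partition N) {m : ℕ} (hm : 0 < m)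
    (h : P.parts = {m}) : msymm (Fin n) F P = psum (Fin n) F m := by
  have hN : N = m := by rw [← P.parts_sum, h, Multiset.sum_singleton]
  subst hN
  have hmem : ∀ i : Fin n, Nat.Partition.ofSym (Sym.replicate N i) = P := by
    intro i
    apply Nat.Partition.ext
    rw [h]
    show Multiset.map (Multiset.count · (Sym.replicate N i : Multiset (Fin n)))
      ((Sym.replicate N i : Multiset (Fin n)).dedup) = {N}
    rw [Sym.coe_replicate]
    have hd : (Multiset.replicate N i).dedup = {i} := by
      have h1 : (Multiset.replicate N i).dedup.Nodup := Multiset.nodup_dedup _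
      have h2 : ({i} : Multiset (Fin n)).Nodup := Multiset.nodup_singleton i
      rw [Multiset.Nodup.ext h1 h2]
      intro a
      rw [Multiset.mem_dedup, Multiset.mem_replicate, Multiset.mem_singleton]
      constructor
      · exact fun hx => hx.2
      · intro hx
        exact ⟨by omega, hx⟩
    rw [hd, Multiset.map_singleton, Multiset.count_replicate, if_pos rfl]
  have hbij : Function.Bijective
      (fun i : Fin n => (⟨Sym.replicate N i, hmem i⟩ :
        {a : Sym (Fin n) N // Nat.Partition.ofSym a = P})) := by
    constructor
    · intro i j hij
      have := congrArg (fun x => (x : {a : Sym (Fin n) N // Nat.Partition.ofSym a = P}).1) hij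
      exact Sym.replicate_right_injective (by omega : N ≠ 0) (Subtype.ext_iff.mp hij)
    · rintro ⟨a, ha⟩
      have hparts : Multiset.map (Multiset.count · (a : Multiset (Fin n)))
          ((a : Multiset (Fin n)).dedup) = {N} := by
        have := congrArg Nat.Partition.parts ha
        rw [h] at this
        exact this
      have hcard1 : Multiset.card ((a : Multiset (Fin n)).dedup) = 1 := by
        have := congrArg Multiset.card hparts
        simpa using this
      obtain ⟨i, hi⟩ := Multiset.card_eq_one.mp hcard1
      have hcount : Multiset.count i (a : Multiset (Fin n)) = N := by
        rw [hi, Multiset.map_singleton] at hparts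
        exact Multiset.singleton_inj.mp hparts
      have haval : (a : Multiset (Fin n)) = Multiset.replicate N i := by
        rw [Multiset.eq_replicate]
        refine ⟨a.2, fun b hb => ?_⟩
        have : b ∈ (a : Multiset (Fin n)).dedup := Multiset.mem_dedup.mpr hb
        rw [hi, Multiset.mem_singleton] at this
        exact this
      refine ⟨i, ?_⟩
      apply Subtype.ext
      apply Sym.coe_injective
      rw [Sym.coe_replicate, haval]
  rw [msymm, psum]
  refine (Fintype.sum_bijective _ hbij (fun i => (X i : MvPolynomial (Fin n) F) ^ N)
    (fun s => ((s.1 : Multiset (Fin n)).map X).prod) ?_).symm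
  intro i
  show (X i : MvPolynomial (Fin n) F) ^ N = ((Sym.replicate N i : Multiset (Fin n)).map X).prod
  rw [Sym.coe_replicate, Multiset.map_replicate, Multiset.prod_replicate]



end CKW

/-- if `char F = 0` or `n < char F`, then
`I_{n,d} = (m_{(d+1)}, …, m_{(d+n)})`, the ideal generated by the power sums of
degrees `d+1, …, d+n`. -/
theorem truncIdeal_eq_span_powerSums (F : Type*) [Field F] (n : ℕ) (hn : 0 < n) (d : ℕ)
    (hp : ringChar F = 0 ∨ n < ringChar F) :
    truncIdeal F n d =
      Ideal.span ((fun j => mSymS F n {d + j}) '' Set.Icc 1 n) := by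
  classical
  have hgen : ((fun j => mSymS F n {d + j}) '' Set.Icc 1 n)
      = ((fun j => CKW.psumS F n (d + j)) '' Set.Icc 1 n) := by
    apply Set.image_congr
    intro j hj
    obtain ⟨hj1, hj2⟩ := Set.mem_Icc.mp hj
    apply Subtype.ext
    show mSym F n {d + j} = psum (Fin n) F (d + j)
    rw [mSym]
    apply CKW.msymm_single_eq_psum hn _ (by omega : 0 < d + j)
    show Multiset.filter (0 < ·) {d + j} = {d + j}
    rw [Multiset.filter_eq_self]
    intro a ha
    rw [Multiset.mem_singleton] at ha
    omega
  rw [hgen]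
  apply le_antisymm
  · intro x hx
    rw [truncIdeal, Ideal.mem_comap] at hx
    have hx' : (x : MvPolynomial (Fin n) F) ∈ Ideal.span
        ((fun s => monomial s (1 : F)) ''
          (Set.range fun i : Fin n => Finsupp.single i (d + 1))) := by
      have hrange : (Set.range fun i : Fin n => (X i : MvPolynomial (Fin n) F) ^ (d + 1))
          = ((fun s => monomial s (1 : F)) ''
            (Set.range fun i : Fin n => Finsupp.single i (d + 1))) := by
        rw [← Set.range_comp]
        apply congrArg Set.range
        funext i
        exact X_pow_eq_monomial
      rwa [hrange] at hx
    have hsupp := MvPolynomial.mem_ideal_span_monomial_image.mp hx'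
    have hΦ : ∀ g ∈ (x : MvPolynomial (Fin n) F).support,
        (∀ a ∈ CKW.typeOf g, 0 < a) ∧ ∃ a ∈ CKW.typeOf g, d + 1 ≤ a := by
      intro g hg
      obtain ⟨si, ⟨i, rfl⟩, hle⟩ := hsupp g hg
      have hgi : d + 1 ≤ g i := Finsupp.single_le_iff.mp hle
      refine ⟨fun a ha => CKW.typeOf_pos ha, g i, ?_, hgi⟩
      rw [CKW.mem_typeOf]
      exact ⟨⟨i, rfl⟩, by omega⟩
    have hspan := CKW.mem_span_MS (fun ρ => (∀ a ∈ ρ, 0 < a) ∧ ∃ a ∈ ρ, d + 1 ≤ a)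
      (x : MvPolynomial (Fin n) F).support.card x le_rfl hΦ
    have hle : Submodule.span F
        (CKW.MS F n '' {ρ | (∀ a ∈ ρ, 0 < a) ∧ ∃ a ∈ ρ, d + 1 ≤ a})
        ≤ Submodule.restrictScalars F
          (Ideal.span ((fun j => CKW.psumS F n (d + j)) '' Set.Icc 1 n)) := by
      rw [Submodule.span_le]
      rintro y ⟨ρ, hρ, rfl⟩
      exact CKW.MS_mem_span d hn hp (ρ.sum + 1) ρ hρ.1 hρ.2 (by omega)
    exact hle hspan
  · rw [Ideal.span_le]
    rintro y ⟨j, hj, rfl⟩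
    obtain ⟨hj1, hj2⟩ := Set.mem_Icc.mp hj
    show CKW.psumS F n (d + j) ∈ truncIdeal F n d
    rw [truncIdeal, Ideal.mem_comap]
    show psum (Fin n) F (d + j) ∈ _
    rw [psum]
    apply Ideal.sum_mem
    intro i _
    have hxp : (X i : MvPolynomial (Fin n) F) ^ (d + j)
        = X i ^ (j - 1) * X i ^ (d + 1) := by
      rw [← pow_add]
      congr 1
      omega
    rw [hxp]
    exact Ideal.mul_mem_left _ _ (Ideal.subset_span ⟨i, rfl⟩)
end

section
/- Let F be a field of characteristic p > 0 and n a positive integer. Let i be a nonnegative integer with p^i ≤ n, and write n = q·p^i + r with q a positive integer and 0 ≤ r < p^i. Then for every positive integer s there exist coefficients a_μ ∈ F such that Σ_{j=1}^{q} (-1)^{j-1} m_{(1^{j·p^i})} · m_{((s+q+1-j)^{p^i})} = m_{((s+q+1)^{p^i})} + Σ_μ a_μ m_μ, where the sum on the right runs over partitions μ of length at most n with lp(μ) ≥ s+1 and lm(μ) < p^i. -/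
open MvPolynomial

namespace NA
open Finset

variable {F : Type*} [Field F] {n : ℕ}

def TS (n t u v : ℕ) : Finset (Finset (Fin n) × Finset (Fin n) × Finset (Fin n)) :=
  Finset.univ.filter (fun x => x.1.card = t ∧ x.2.1.card = u ∧ x.2.2.card = v ∧
    Disjoint x.1 x.2.1 ∧ Disjoint x.1 x.2.2 ∧ Disjoint x.2.1 x.2.2)

lemma mem_TS {t u v : ℕ} {x : Finset (Fin n) × Finset (Fin n) × Finset (Fin n)} :
    x ∈ TS n t u v ↔ x.1.card = t ∧ x.2.1.card = u ∧ x.2.2.card = v ∧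
      Disjoint x.1 x.2.1 ∧ Disjoint x.1 x.2.2 ∧ Disjoint x.2.1 x.2.2 := by
  simp [TS]

lemma ofSym_parts {N : ℕ} (s : Sym (Fin n) N) :
    (Nat.Partition.ofSym s).parts
      = (Multiset.map (fun i => s.1.count i) Finset.univ.val).filter (0 < ·) := by
  show s.1.dedup.map s.1.count = _
  rw [Multiset.filter_map]
  congr 1
  ext a
  simp only [Multiset.count_dedup, Multiset.count_filter, Function.comp_apply,
    Multiset.count_pos, Multiset.count_univ]

/-- The multiset with multiplicity `b1` on `A`, `b2` on `B`, `b3` on `C`. -/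
def lev (b1 b2 b3 : ℕ) (A B C : Finset (Fin n)) : Multiset (Fin n) :=
  b1 • A.val + b2 • B.val + b3 • C.val

lemma count_val (A : Finset (Fin n)) (i : Fin n) : A.val.count i = if i ∈ A then 1 else 0 := by
  split
  · exact Multiset.count_eq_one_of_mem A.nodup ‹_›
  · exact Multiset.count_eq_zero_of_notMem ‹_›

lemma count_lev {b1 b2 b3 : ℕ} {A B C : Finset (Fin n)}
    (dAB : Disjoint A B) (dAC : Disjoint A C) (dBC : Disjoint B C) (i : Fin n) :
    (lev b1 b2 b3 A B C).count i
      = if i ∈ A then b1 else if i ∈ B then b2 else if i ∈ C then b3 else 0 := by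
  have hab := Finset.disjoint_left.mp dAB
  have hac := Finset.disjoint_left.mp dAC
  have hbc := Finset.disjoint_left.mp dBC
  simp only [lev, Multiset.count_add, Multiset.count_nsmul, count_val]
  by_cases hA : i ∈ A
  · simp [hA, fun h => hab hA h, fun h => hac hA h]
  · by_cases hB : i ∈ B
    · simp [hA, hB, fun h => hbc hB h]
    · by_cases hC : i ∈ C <;> simp [hA, hB, hC]

lemma card_lev (b1 b2 b3 : ℕ) (A B C : Finset (Fin n)) :
    Multiset.card (lev b1 b2 b3 A B C) = b1 * A.card + b2 * B.card + b3 * C.card := by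
  simp only [lev, Multiset.card_add, Multiset.card_nsmul]
  rfl

lemma prod_lev (b1 b2 b3 : ℕ) (A B C : Finset (Fin n)) :
    (((lev b1 b2 b3 A B C).map X).prod : MvPolynomial (Fin n) F)
      = (∏ i ∈ A, X i ^ b1) * (∏ i ∈ B, X i ^ b2) * (∏ i ∈ C, X i ^ b3) := by
  simp only [lev, Multiset.map_add, Multiset.prod_add, Multiset.map_nsmul, Multiset.prod_nsmul]
  rw [Finset.prod_pow, Finset.prod_pow, Finset.prod_pow]
  rfl

lemma levels_lev {b1 b2 b3 : ℕ} (h1 : 0 < b1) (h2 : 0 < b2) (h3 : 0 < b3)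
    (h12 : b1 ≠ b2) (h13 : b1 ≠ b3) (h23 : b2 ≠ b3) {A B C : Finset (Fin n)}
    (dAB : Disjoint A B) (dAC : Disjoint A C) (dBC : Disjoint B C) :
    ((Finset.univ.val.map (fun i => (lev b1 b2 b3 A B C).count i)).filter (0 < ·))
      = Multiset.replicate A.card b1 + Multiset.replicate B.card b2
        + Multiset.replicate C.card b3 := by
  have hab := Finset.disjoint_left.mp dAB
  have hac := Finset.disjoint_left.mp dAC
  have hbc := Finset.disjoint_left.mp dBC
  have key : ∀ b : ℕ, 0 < b →
      (Finset.univ.filter (fun i => b = (lev b1 b2 b3 A B C).count i))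
        = (if b = b1 then A else if b = b2 then B else if b = b3 then C else ∅) := by
    intro b hb
    ext i
    simp only [Finset.mem_filter, Finset.mem_univ, true_and]
    rw [count_lev dAB dAC dBC]
    by_cases hA : i ∈ A
    · rw [if_pos hA]
      split_ifs with g1 g2 g3
      · exact iff_of_true g1 hA
      · exact iff_of_false g1 (fun h => hab hA h)
      · exact iff_of_false g1 (fun h => hac hA h)
      · exact iff_of_false g1 (Finset.notMem_empty i)
    · rw [if_neg hA]
      by_cases hB : i ∈ B
      · rw [if_pos hB]
        split_ifs with g1 g2 g3
        · exact iff_of_false (by omega) (fun h => hab h hB)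
        · exact iff_of_true g2 hB
        · exact iff_of_false g2 (fun h => hbc hB h)
        · exact iff_of_false g2 (Finset.notMem_empty i)
      · rw [if_neg hB]
        by_cases hC : i ∈ C
        · rw [if_pos hC]
          split_ifs with g1 g2 g3
          · exact iff_of_false (by omega) (fun h => hac h hC)
          · exact iff_of_false (by omega) (fun h => hbc h hC)
          · exact iff_of_true g3 hC
          · exact iff_of_false g3 (Finset.notMem_empty i)
        · rw [if_neg hC]
          split_ifs with g1 g2 g3
          · exact iff_of_false (by omega) hA
          · exact iff_of_false (by omega) hB
          · exact iff_of_false (by omega) hC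
          · exact iff_of_false (by omega) (Finset.notMem_empty i)
  ext b
  rw [Multiset.count_filter]
  split_ifs with h0
  · rw [Multiset.count_map]
    have h' : Finset.univ.val.filter (fun i => b = (lev b1 b2 b3 A B C).count i)
        = (Finset.univ.filter (fun i => b = (lev b1 b2 b3 A B C).count i)).val := rfl
    rw [h', key b h0]
    rw [Multiset.count_add, Multiset.count_add, Multiset.count_replicate,
      Multiset.count_replicate, Multiset.count_replicate]
    split_ifs <;> first | (exfalso; omega) | (simp only [add_zero, zero_add]; rfl)
  · push_neg at h0
    interval_cases b
    simp [Multiset.count_replicate, Multiset.count_add, h1.ne', h2.ne', h3.ne']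

lemma shape_of_parts {b1 b2 b3 t u v N : ℕ} (s : Sym (Fin n) N)
    (hs : (Nat.Partition.ofSym s).parts
      = Multiset.replicate t b1 + Multiset.replicate u b2 + Multiset.replicate v b3)
    (i : Fin n) :
    s.1.count i = 0 ∨ s.1.count i = b1 ∨ s.1.count i = b2 ∨ s.1.count i = b3 := by
  by_cases h : s.1.count i = 0
  · exact Or.inl h
  · have hmem : s.1.count i ∈ (Nat.Partition.ofSym s).parts := by
      rw [ofSym_parts]
      refine Multiset.mem_filter.mpr ⟨Multiset.mem_map.mpr ⟨i, by simp, rfl⟩, by omega⟩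
    rw [hs] at hmem
    simp only [Multiset.mem_add, Multiset.mem_replicate] at hmem
    rcases hmem with (⟨-, h'⟩ | ⟨-, h'⟩) | ⟨-, h'⟩ <;> omega

lemma rep_lev {b1 b2 b3 : ℕ} (h1 : 0 < b1) (h12 : b1 ≠ b2) (h13 : b1 ≠ b3) (h23 : b2 ≠ b3)
    (s : Multiset (Fin n))
    (hshape : ∀ i, s.count i = 0 ∨ s.count i = b1 ∨ s.count i = b2 ∨ s.count i = b3) :
    s = lev b1 b2 b3 (Finset.univ.filter (fun i => s.count i = b1))
      (Finset.univ.filter (fun i => s.count i = b2))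
      (Finset.univ.filter (fun i => s.count i = b3)) := by
  have dAB : Disjoint (Finset.univ.filter (fun i => s.count i = b1))
      (Finset.univ.filter (fun i => s.count i = b2)) := by
    rw [Finset.disjoint_left]; intro i hi hj; simp_all
  have dAC : Disjoint (Finset.univ.filter (fun i => s.count i = b1))
      (Finset.univ.filter (fun i => s.count i = b3)) := by
    rw [Finset.disjoint_left]; intro i hi hj; simp_all
  have dBC : Disjoint (Finset.univ.filter (fun i => s.count i = b2))
      (Finset.univ.filter (fun i => s.count i = b3)) := by
    rw [Finset.disjoint_left]; intro i hi hj; simp_all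
  ext i
  rw [count_lev dAB dAC dBC]
  simp only [Finset.mem_filter, Finset.mem_univ, true_and]
  rcases hshape i with h | h | h | h <;> split_ifs <;> omega



theorem bridge (b1 b2 b3 t u v : ℕ) (h1 : 0 < b1) (h2 : 0 < b2) (h3 : 0 < b3)
    (h12 : b1 ≠ b2) (h13 : b1 ≠ b3) (h23 : b2 ≠ b3) :
    mSym F n (Multiset.replicate t b1 + Multiset.replicate u b2 + Multiset.replicate v b3)
      = ∑ x ∈ TS n t u v,
          (∏ i ∈ x.1, X i ^ b1) * (∏ i ∈ x.2.1, X i ^ b2) * (∏ i ∈ x.2.2, X i ^ b3) := by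
  classical
  set lam : Multiset ℕ :=
    Multiset.replicate t b1 + Multiset.replicate u b2 + Multiset.replicate v b3 with hlam
  have hfil : lam.filter (0 < ·) = lam := by
    rw [Multiset.filter_eq_self]
    intro x hx
    rw [hlam] at hx
    simp only [Multiset.mem_add, Multiset.mem_replicate] at hx
    rcases hx with (⟨-, rfl⟩ | ⟨-, rfl⟩) | ⟨-, rfl⟩ <;> assumption
  have hc1 : lam.count b1 = t := by
    rw [hlam, Multiset.count_add, Multiset.count_add, Multiset.count_replicate,
      Multiset.count_replicate, Multiset.count_replicate, if_pos rfl,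
      if_neg (by omega), if_neg (by omega)]
    omega
  have hc2 : lam.count b2 = u := by
    rw [hlam, Multiset.count_add, Multiset.count_add, Multiset.count_replicate,
      Multiset.count_replicate, Multiset.count_replicate, if_neg (by omega),
      if_pos rfl, if_neg (by omega)]
    omega
  have hc3 : lam.count b3 = v := by
    rw [hlam, Multiset.count_add, Multiset.count_add, Multiset.count_replicate,
      Multiset.count_replicate, Multiset.count_replicate, if_neg (by omega),
      if_neg (by omega), if_pos rfl]
    omega
  have hcards : ∀ (N' : ℕ) (a : Sym (Fin n) N'), (Nat.Partition.ofSym a).parts = lam →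
      ∀ b : ℕ, 0 < b →
        (Finset.univ.filter (fun i => a.1.count i = b)).card = lam.count b := by
    intro N' a ha b hb
    have h₁ := ofSym_parts a
    rw [ha] at h₁
    have h₂ : lam.count b = Multiset.count b (Finset.univ.val.map (fun i => a.1.count i)) := by
      rw [h₁, Multiset.count_filter, if_pos hb]
    rw [h₂, Multiset.count_map]
    have h₃ : Finset.univ.val.filter (fun i => b = a.1.count i)
        = (Finset.univ.filter (fun i => a.1.count i = b)).val := by
      rw [Finset.filter_val]
      exact Multiset.filter_congr (fun i _ => by constructor <;> exact Eq.symm)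
    rw [h₃]
    rfl
  rw [mSym]
  rw [msymm]
  refine Finset.sum_bij (fun (s : {a : Sym (Fin n) ((lam.filter (0 < ·)).sum) //
      Nat.Partition.ofSym a = ⟨Multiset.filter (0 < ·) lam,
        fun {_} hx => (Multiset.mem_filter.mp hx).2, rfl⟩}) (_ : s ∈ Finset.univ) =>
      (Finset.univ.filter (fun i => s.1.1.count i = b1),
       Finset.univ.filter (fun i => s.1.1.count i = b2),
       Finset.univ.filter (fun i => s.1.1.count i = b3))) ?_ ?_ ?_ ?_
  · -- membership
    intro s _
    have hparts : (Nat.Partition.ofSym s.1).parts = lam := by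
      rw [s.2]; exact hfil
    rw [mem_TS]
    refine ⟨by rw [hcards _ _ hparts b1 h1, hc1], by rw [hcards _ _ hparts b2 h2, hc2],
      by rw [hcards _ _ hparts b3 h3, hc3], ?_, ?_, ?_⟩ <;>
      (rw [Finset.disjoint_left]; intro i hi hj;
        simp only [Finset.mem_filter] at hi hj; omega)
  · -- injectivity
    intro s _ s' _ hss
    have hparts : (Nat.Partition.ofSym s.1).parts = lam := by rw [s.2]; exact hfil
    have hparts' : (Nat.Partition.ofSym s'.1).parts = lam := by rw [s'.2]; exact hfil
    have hr := rep_lev h1 h12 h13 h23 s.1.1 (shape_of_parts s.1 hparts)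
    have hr' := rep_lev h1 h12 h13 h23 s'.1.1 (shape_of_parts s'.1 hparts')
    apply Subtype.ext
    apply Subtype.ext
    rw [hr, hr']
    have e1 := congrArg Prod.fst hss
    have e2 := congrArg (fun y => y.2.1) hss
    have e3 := congrArg (fun y => y.2.2) hss
    simp only at e1 e2 e3
    rw [e1, e2, e3]
  · -- surjectivity
    intro x hx
    rw [mem_TS] at hx
    obtain ⟨hxA, hxB, hxC, dAB, dAC, dBC⟩ := hx
    have hab := Finset.disjoint_left.mp dAB
    have hac := Finset.disjoint_left.mp dAC
    have hbc := Finset.disjoint_left.mp dBC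
    have hcard : Multiset.card (lev b1 b2 b3 x.1 x.2.1 x.2.2) = (lam.filter (0 < ·)).sum := by
      rw [card_lev, hxA, hxB, hxC, hfil, hlam]
      simp only [Multiset.sum_add, Multiset.sum_replicate, smul_eq_mul]
      ring
    have hof : Nat.Partition.ofSym (⟨lev b1 b2 b3 x.1 x.2.1 x.2.2, hcard⟩ :
        Sym (Fin n) ((lam.filter (0 < ·)).sum)) = ⟨Multiset.filter (0 < ·) lam,
        fun {_} hx => (Multiset.mem_filter.mp hx).2, rfl⟩ := by
      apply Nat.Partition.ext
      refine (ofSym_parts _).trans ?_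
      show Multiset.filter (0 < ·)
          (Multiset.map (fun i => Multiset.count i (lev b1 b2 b3 x.1 x.2.1 x.2.2))
            Finset.univ.val) = Multiset.filter (0 < ·) lam
      rw [hfil]
      have hl := levels_lev h1 h2 h3 h12 h13 h23 dAB dAC dBC
      rw [hl, hxA, hxB, hxC, hlam]
    refine ⟨⟨⟨lev b1 b2 b3 x.1 x.2.1 x.2.2, hcard⟩, hof⟩, Finset.mem_univ _, ?_⟩
    have e1 : Finset.univ.filter (fun i => (lev b1 b2 b3 x.1 x.2.1 x.2.2).count i = b1) = x.1 := by
      ext i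
      simp only [Finset.mem_filter, Finset.mem_univ, true_and]
      rw [count_lev dAB dAC dBC]
      split_ifs with hA hB hC
      · exact iff_of_true rfl hA
      · exact iff_of_false (by omega) (fun h => hab h hB)
      · exact iff_of_false (by omega) (fun h => hac h hC)
      · exact iff_of_false (by omega) hA
    have e2 : Finset.univ.filter (fun i => (lev b1 b2 b3 x.1 x.2.1 x.2.2).count i = b2) = x.2.1 := by
      ext i
      simp only [Finset.mem_filter, Finset.mem_univ, true_and]
      rw [count_lev dAB dAC dBC]
      split_ifs with hA hB hC
      · exact iff_of_false (by omega) (fun h => hab hA h)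
      · exact iff_of_true rfl hB
      · exact iff_of_false (by omega) (fun h => hbc h hC)
      · exact iff_of_false (by omega) hB
    have e3 : Finset.univ.filter (fun i => (lev b1 b2 b3 x.1 x.2.1 x.2.2).count i = b3) = x.2.2 := by
      ext i
      simp only [Finset.mem_filter, Finset.mem_univ, true_and]
      rw [count_lev dAB dAC dBC]
      split_ifs with hA hB hC
      · exact iff_of_false (by omega) (fun h => hac hA h)
      · exact iff_of_false (by omega) (fun h => hbc hB h)
      · exact iff_of_true rfl hC
      · exact iff_of_false (by omega) hC
    show (_, _, _) = x
    rw [e1, e2, e3]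
  · -- values
    intro s _
    have hparts : (Nat.Partition.ofSym s.1).parts = lam := by rw [s.2]; exact hfil
    have hr := rep_lev h1 h12 h13 h23 s.1.1 (shape_of_parts s.1 hparts)
    show (Multiset.map X s.1.1).prod = _
    conv_lhs => rw [hr]
    exact prod_lev b1 b2 b3 _ _ _



lemma TS_empty {t u v : ℕ} (h : n < t + u + v) : TS n t u v = ∅ := by
  rw [Finset.eq_empty_iff_forall_notMem]
  intro x hx
  rw [mem_TS] at hx
  obtain ⟨h1, h2, h3, d12, d13, d23⟩ := hx
  have hc : (x.1 ∪ x.2.1 ∪ x.2.2).card = t + u + v := by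
    rw [Finset.card_union_of_disjoint (Finset.disjoint_union_left.mpr ⟨d13, d23⟩),
      Finset.card_union_of_disjoint d12, h1, h2, h3]
  have h2' := Finset.card_le_univ (x.1 ∪ x.2.1 ∪ x.2.2)
  rw [hc, Fintype.card_fin] at h2'
  omega

lemma sup_replicate (m b : ℕ) (hm : 0 < m) : (Multiset.replicate m b).sup = b := by
  apply le_antisymm
  · exact Multiset.sup_le.mpr fun x hx => le_of_eq (Multiset.eq_of_mem_replicate hx)
  · exact Multiset.le_sup (by simp [Multiset.mem_replicate]; omega)

lemma sum_TS_00v (b1 b2 b3 v : ℕ) :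
    (∑ x ∈ TS n 0 0 v,
        (∏ i ∈ x.1, X i ^ b1) * (∏ i ∈ x.2.1, X i ^ b2)
          * (∏ i ∈ x.2.2, (X i : MvPolynomial (Fin n) F) ^ b3))
      = ∑ C ∈ powersetCard v (univ : Finset (Fin n)), ∏ i ∈ C, X i ^ b3 := by
  refine Finset.sum_nbij' (fun x => x.2.2) (fun C => (∅, ∅, C)) ?_ ?_ ?_ ?_ ?_
  · intro x hx
    rw [mem_TS] at hx
    exact Finset.mem_powersetCard_univ.mpr hx.2.2.1
  · intro C hC
    rw [mem_TS]
    simpa using Finset.mem_powersetCard_univ.mp hC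
  · rintro ⟨x1, x2, x3⟩ hx
    rw [mem_TS] at hx
    obtain ⟨h1, h2, -⟩ := hx
    rw [Finset.card_eq_zero] at h1 h2
    simp only at h1 h2 ⊢
    rw [h1, h2]
  · intro C hC; rfl
  · rintro ⟨x1, x2, x3⟩ hx
    rw [mem_TS] at hx
    obtain ⟨h1, h2, -⟩ := hx
    rw [Finset.card_eq_zero] at h1 h2
    simp only at h1 h2 ⊢
    rw [h1, h2]
    simp

lemma prod_expand (a k m : ℕ) (hk : k ≤ m) :
    (∑ S ∈ powersetCard k (univ : Finset (Fin n)), ∏ i ∈ S, (X i : MvPolynomial (Fin n) F) ^ a)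
      * (∑ T ∈ powersetCard m (univ : Finset (Fin n)), ∏ i ∈ T, (X i : MvPolynomial (Fin n) F) ^ 1)
    = ∑ t ∈ Finset.range (k + 1), ∑ x ∈ TS n t (k - t) (m - t),
        (∏ i ∈ x.1, X i ^ (a + 1)) * (∏ i ∈ x.2.1, X i ^ a) * (∏ i ∈ x.2.2, X i ^ 1) := by
  rw [Finset.sum_mul_sum, ← Finset.sum_product', Finset.sum_sigma']
  refine Finset.sum_nbij' (fun P => ⟨(P.1 ∩ P.2).card, (P.1 ∩ P.2, P.1 \ P.2, P.2 \ P.1)⟩)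
    (fun x => (x.2.1 ∪ x.2.2.1, x.2.1 ∪ x.2.2.2)) ?_ ?_ ?_ ?_ ?_
  · rintro ⟨S, T⟩ hST
    dsimp only
    rw [Finset.mem_product, Finset.mem_powersetCard_univ, Finset.mem_powersetCard_univ] at hST
    obtain ⟨hS, hT⟩ := hST
    have h1 : (S \ T).card + (S ∩ T).card = k := by rw [Finset.card_sdiff_add_card_inter, hS]
    have h2 : (T \ S).card + (S ∩ T).card = m := by
      rw [Finset.inter_comm, Finset.card_sdiff_add_card_inter, hT]
    refine Finset.mem_sigma.mpr ⟨Finset.mem_range.mpr (show (S ∩ T).card < k + 1 by omega),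
      mem_TS.mpr ⟨rfl, show (S \ T).card = k - (S ∩ T).card by omega,
        show (T \ S).card = m - (S ∩ T).card by omega, ?_, ?_, ?_⟩⟩
    · exact Finset.disjoint_of_subset_left Finset.inter_subset_right (Finset.sdiff_disjoint.symm)
    · exact Finset.disjoint_of_subset_left Finset.inter_subset_left (Finset.sdiff_disjoint.symm)
    · exact disjoint_sdiff_sdiff
  · rintro ⟨t, A, B, C⟩ hx
    dsimp only
    rw [Finset.mem_sigma, Finset.mem_range, mem_TS] at hx
    obtain ⟨htk, hA, hB, hC, dAB, dAC, dBC⟩ := hx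
    rw [Finset.mem_product, Finset.mem_powersetCard_univ, Finset.mem_powersetCard_univ]
    constructor
    · rw [Finset.card_union_of_disjoint dAB]; omega
    · rw [Finset.card_union_of_disjoint dAC]; omega
  · rintro ⟨S, T⟩ hST
    dsimp only
    have e1 : (S ∩ T) ∪ (S \ T) = S := by rw [Finset.union_comm, Finset.sdiff_union_inter]
    have e2 : (S ∩ T) ∪ (T \ S) = T := by
      rw [Finset.inter_comm, Finset.union_comm, Finset.sdiff_union_inter]
    simp only [e1, e2]
  · rintro ⟨t, A, B, C⟩ hx
    dsimp only
    rw [Finset.mem_sigma, Finset.mem_range, mem_TS] at hx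
    obtain ⟨htk, hA, hB, hC, dAB, dAC, dBC⟩ := hx
    have hab := Finset.disjoint_left.mp dAB
    have hac := Finset.disjoint_left.mp dAC
    have hbc := Finset.disjoint_left.mp dBC
    have h1 : (A ∪ B) ∩ (A ∪ C) = A := by
      ext y
      have h1' := @hab y; have h2' := @hac y; have h3' := @hbc y
      simp only [Finset.mem_inter, Finset.mem_union]
      tauto
    have h2 : (A ∪ B) \ (A ∪ C) = B := by
      ext y
      have h1' := @hab y; have h2' := @hac y; have h3' := @hbc y
      simp only [Finset.mem_sdiff, Finset.mem_union, not_or]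
      tauto
    have h3 : (A ∪ C) \ (A ∪ B) = C := by
      ext y
      have h1' := @hab y; have h2' := @hac y; have h3' := @hbc y
      simp only [Finset.mem_sdiff, Finset.mem_union, not_or]
      tauto
    simp only [h1, h2, h3, hA]
  · rintro ⟨S, T⟩ hST
    have e1 : (S ∩ T) ∪ (S \ T) = S := by rw [Finset.union_comm, Finset.sdiff_union_inter]
    have e2 : (S ∩ T) ∪ (T \ S) = T := by
      rw [Finset.inter_comm, Finset.union_comm, Finset.sdiff_union_inter]
    have d1 : Disjoint (S ∩ T) (S \ T) :=
      Finset.disjoint_of_subset_left Finset.inter_subset_right (Finset.sdiff_disjoint.symm)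
    have d2 : Disjoint (S ∩ T) (T \ S) :=
      Finset.disjoint_of_subset_left Finset.inter_subset_left (Finset.sdiff_disjoint.symm)
    dsimp only
    calc (∏ i ∈ S, (X i : MvPolynomial (Fin n) F) ^ a) * ∏ i ∈ T, (X i : MvPolynomial (Fin n) F) ^ 1
        = ((∏ i ∈ S ∩ T, (X i : MvPolynomial (Fin n) F) ^ a) * ∏ i ∈ S \ T, (X i :MvPolynomial (Fin n) F)^ a)
          * ((∏ i ∈ S ∩ T, (X i : MvPolynomial (Fin n) F) ^ 1) * ∏ i ∈ T \ S, (X i : MvPolynomial (Fin n) F) ^ 1) := by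
          rw [← Finset.prod_union d1, ← Finset.prod_union d2, e1, e2]
      _ = (((∏ i ∈ S ∩ T, (X i : MvPolynomial (Fin n) F) ^ a) * ∏ i ∈ S ∩ T, (X i : MvPolynomial (Fin n) F) ^ 1)
            * ∏ i ∈ S \ T, (X i : MvPolynomial (Fin n) F) ^ a) * ∏ i ∈ T \ S, (X i : MvPolynomial (Fin n) F) ^ 1 := by
          ring
      _ = ((∏ i ∈ S ∩ T, (X i : MvPolynomial (Fin n) F) ^ (a + 1))
            * ∏ i ∈ S \ T, (X i : MvPolynomial (Fin n) F) ^ a) * ∏ i ∈ T \ S, (X i : MvPolynomial (Fin n) F) ^ 1 := by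
          rw [← Finset.prod_mul_distrib]
          simp only [← pow_add]
      _ = _ := rfl

lemma mSym_rep (b c : ℕ) (hb : 0 < b) :
    mSym F n (Multiset.replicate c b)
      = ∑ S ∈ powersetCard c (univ : Finset (Fin n)), ∏ i ∈ S, (X i : MvPolynomial (Fin n) F) ^ b := by
  have h : Multiset.replicate c b
      = Multiset.replicate 0 (b + 2) + Multiset.replicate 0 (b + 1) + Multiset.replicate c b := by
    simp
  rw [h, bridge (b + 2) (b + 1) b 0 0 c (by omega) (by omega) hb (by omega) (by omega) (by omega),
    sum_TS_00v]

lemma mSym_zero (b1 b2 b3 t u v : ℕ) (h1 : 0 < b1) (h2 : 0 < b2) (h3 : 0 < b3)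
    (h12 : b1 ≠ b2) (h13 : b1 ≠ b3) (h23 : b2 ≠ b3) (h : n < t + u + v) :
    mSym F n (Multiset.replicate t b1 + Multiset.replicate u b2 + Multiset.replicate v b3)
      = (0 : MvPolynomial (Fin n) F) := by
  rw [bridge b1 b2 b3 t u v h1 h2 h3 h12 h13 h23, TS_empty h, Finset.sum_empty]

lemma stepA (a k m : ℕ) (ha : 2 ≤ a) (hkm : k ≤ m) :
    mSym F n (Multiset.replicate m 1) * mSym F n (Multiset.replicate k a)
      = ∑ t ∈ Finset.range (k + 1),
          mSym F n (Multiset.replicate t (a + 1) + Multiset.replicate (k - t) a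
            + Multiset.replicate (m - t) 1) := by
  rw [mSym_rep 1 m one_pos, mSym_rep a k (by omega), mul_comm, prod_expand a k m hkm]
  refine Finset.sum_congr rfl fun t ht => ?_
  exact (bridge (a + 1) a 1 t (k - t) (m - t) (by omega) (by omega) one_pos
    (by omega) (by omega) (by omega)).symm

lemma telescope (P : ℕ → MvPolynomial (Fin n) F) (q : ℕ) :
    ∑ j ∈ Finset.Icc 1 q, (-1 : F) ^ (j - 1) • (P (j + 1) + P j)
      = P 1 - (-1 : F) ^ q • P (q + 1) := by
  induction q with
  | zero => simp
  | succ q ih =>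
    rw [Finset.sum_Icc_succ_top (by omega), ih]
    have he : q + 1 - 1 = q := by omega
    rw [he, pow_succ, mul_neg_one, neg_smul, sub_neg_eq_add, smul_add]
    abel


/-- The partition occurring in the middle terms. -/
def muD (s q k j t : ℕ) : Multiset ℕ :=
  Multiset.replicate t (s + q + 1 - j + 1) + Multiset.replicate (k - t) (s + q + 1 - j)
    + Multiset.replicate (j * k - t) 1

end NA

open NA

/-- Lemma: generalized Newton formulas: with `p = char F > 0`, `p^i ≤ n`,
`n = q·p^i + r`, `0 ≤ r < p^i`, `q ≥ 1`, for every positive `s` one has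
`∑_{j=1}^q (-1)^{j-1} m_{(1^{j·p^i})} m_{((s+q+1-j)^{p^i})} = m_{((s+q+1)^{p^i})} + ∑ a_μ m_μ`
with the `μ`'s partitions of length at most `n` with `lp(μ) ≥ s+1` and `lm(μ) < p^i`. -/
theorem newton_like (F : Type*) [Field F] (n : ℕ) (hn : 0 < n)
    (hp : 0 < ringChar F) (i : ℕ) (hpi : ringChar F ^ i ≤ n)
    (q r : ℕ) (hq : 0 < q) (hnqr : n = q * ringChar F ^ i + r) (hr : r < ringChar F ^ i)
    (s : ℕ) (hs : 0 < s) :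
    ∃ aC : Multiset ℕ →₀ F,
      (∀ mu ∈ aC.support, IsPartition n mu ∧ s + 1 ≤ leadingPart mu ∧
        leadingMult mu < ringChar F ^ i) ∧
      ∑ j ∈ Finset.Icc 1 q, (-1 : F) ^ (j - 1) •
        (mSym F n (Multiset.replicate (j * ringChar F ^ i) 1) *
          mSym F n (Multiset.replicate (ringChar F ^ i) (s + q + 1 - j))) =
      mSym F n (Multiset.replicate (ringChar F ^ i) (s + q + 1))
        + aC.sum (fun mu c => c • mSym F n mu) := by
  classical
  set k := ringChar F ^ i with hkdef
  have hkpos : 0 < k := pow_pos hp i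
  have hkmul : ∀ j : ℕ, 1 ≤ j → k ≤ j * k := fun j hj => by
    calc k = 1 * k := (one_mul k).symm
    _ ≤ j * k := Nat.mul_le_mul_right k hj
  -- the vanishing lemma for middle terms with too many parts
  have hvan : ∀ j t : ℕ, 1 ≤ j → j ≤ q → n < t + (k - t) + (j * k - t) →
      mSym F n (muD s q k j t) = 0 := by
    intro j t hj1 hj2 hcard
    exact mSym_zero (s + q + 1 - j + 1) (s + q + 1 - j) 1 t (k - t) (j * k - t)
      (by omega) (by omega) one_pos (by omega) (by omega) (by omega) hcard
  -- Step A
  have hstep : ∀ j : ℕ, 1 ≤ j → j ≤ q →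
      mSym F n (Multiset.replicate (j * k) 1) * mSym F n (Multiset.replicate k (s + q + 1 - j))
        = ∑ t ∈ Finset.range (k + 1), mSym F n (muD s q k j t) := by
    intro j h1 h2
    exact stepA (s + q + 1 - j) k (j * k) (by omega) (hkmul j h1)
  -- splitting off t = 0 and t = k
  have hsplit : ∀ j : ℕ, ∑ t ∈ Finset.range (k + 1), mSym F n (muD s q k j t)
      = mSym F n (muD s q k j 0) + mSym F n (muD s q k j k)
        + ∑ t ∈ Finset.Ioo 0 k, mSym F n (muD s q k j t) := by
    intro j
    have hins : Finset.range (k + 1) = insert 0 (insert k (Finset.Ioo 0 k)) := by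
      ext a
      simp only [Finset.mem_range, Finset.mem_insert, Finset.mem_Ioo]
      omega
    rw [hins, Finset.sum_insert (by simp only [Finset.mem_insert, Finset.mem_Ioo]; omega),
      Finset.sum_insert (by simp only [Finset.mem_Ioo]; omega), add_assoc]
  -- telescoping identities
  have hG0 : ∀ j : ℕ, 1 ≤ j → j ≤ q → muD s q k j 0 = muD s q k (j + 1) k := by
    intro j h1 h2
    have e1 : s + q + 1 - (j + 1) + 1 = s + q + 1 - j := by omega
    have e2 : (j + 1) * k - k = j * k := by rw [Nat.succ_mul]; omega
    rw [muD, muD, e1, e2]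
    simp
  have hP1 : muD s q k 1 k = Multiset.replicate k (s + q + 1) := by
    have e1 : s + q + 1 - 1 + 1 = s + q + 1 := by omega
    have e2 : 1 * k - k = 0 := by omega
    rw [muD, e1, e2]
    simp
  have hPq1 : mSym F n (muD s q k (q + 1) k) = 0 := by
    have e : muD s q k (q + 1) k
        = Multiset.replicate k (s + 1) + Multiset.replicate 0 (s + 2)
          + Multiset.replicate (q * k) 1 := by
      have e1 : s + q + 1 - (q + 1) + 1 = s + 1 := by omega
      have e2 : (q + 1) * k - k = q * k := by rw [Nat.succ_mul]; omega
      rw [muD, e1, e2]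
      simp
    rw [e]
    exact mSym_zero (s + 1) (s + 2) 1 k 0 (q * k) (by omega) (by omega) one_pos
      (by omega) (by omega) (by omega) (by omega)
  -- the coefficient finsupp
  set aC : Multiset ℕ →₀ F := ∑ j ∈ Finset.Icc 1 q,
      ∑ t ∈ (Finset.Ioo 0 k).filter (fun t => k + (j * k - t) ≤ n),
        Finsupp.single (muD s q k j t) ((-1 : F) ^ (j - 1)) with haC
  refine ⟨aC, ?_, ?_⟩
  · -- support condition
    intro m hm
    rw [haC] at hm
    have h1 := Finsupp.support_finset_sum hm
    rw [Finset.mem_biUnion] at h1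
    obtain ⟨j, hj, h2⟩ := h1
    have h3 := Finsupp.support_finset_sum h2
    rw [Finset.mem_biUnion] at h3
    obtain ⟨t, ht, h4⟩ := h3
    have h5 := Finsupp.support_single_subset h4
    rw [Finset.mem_singleton] at h5
    subst h5
    rw [Finset.mem_Icc] at hj
    rw [Finset.mem_filter, Finset.mem_Ioo] at ht
    obtain ⟨⟨ht0, htk⟩, htn⟩ := ht
    have hjk := hkmul j hj.1
    have hsup : (muD s q k j t).sup = s + q + 1 - j + 1 := by
      rw [muD, Multiset.sup_add, Multiset.sup_add, sup_replicate _ _ ht0,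
        sup_replicate _ _ (by omega), sup_replicate _ _ (by omega)]
      show max (max _ _) _ = _
      omega
    refine ⟨⟨?_, ?_⟩, ?_, ?_⟩
    · intro x hx
      rw [muD] at hx
      simp only [Multiset.mem_add, Multiset.mem_replicate] at hx
      rcases hx with (⟨-, rfl⟩ | ⟨-, rfl⟩) | ⟨-, rfl⟩ <;> omega
    · rw [muD]
      simp only [Multiset.card_add, Multiset.card_replicate]
      omega
    · rw [leadingPart, hsup]
      omega
    · rw [leadingMult, hsup, muD, Multiset.count_add, Multiset.count_add,
        Multiset.count_replicate, Multiset.count_replicate, Multiset.count_replicate,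
        if_pos rfl, if_neg (by omega), if_neg (by omega)]
      omega
  · -- the main identity
    calc ∑ j ∈ Finset.Icc 1 q, (-1 : F) ^ (j - 1) •
          (mSym F n (Multiset.replicate (j * k) 1) *
            mSym F n (Multiset.replicate k (s + q + 1 - j)))
        = ∑ j ∈ Finset.Icc 1 q, ((-1 : F) ^ (j - 1) •
            (mSym F n (muD s q k j 0) + mSym F n (muD s q k j k))
          + (-1 : F) ^ (j - 1) • ∑ t ∈ Finset.Ioo 0 k, mSym F n (muD s q k j t)) := by
          refine Finset.sum_congr rfl fun j hj => ?_
          rw [Finset.mem_Icc] at hj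
          rw [hstep j hj.1 hj.2, hsplit j, smul_add]
      _ = (∑ j ∈ Finset.Icc 1 q, (-1 : F) ^ (j - 1) •
            (mSym F n (muD s q k j 0) + mSym F n (muD s q k j k)))
          + ∑ j ∈ Finset.Icc 1 q, (-1 : F) ^ (j - 1) •
            ∑ t ∈ Finset.Ioo 0 k, mSym F n (muD s q k j t) := Finset.sum_add_distrib
      _ = mSym F n (Multiset.replicate k (s + q + 1))
          + aC.sum (fun mu c => c • mSym F n mu) := by
          congr 1
          · -- telescoping part
            have htel1 : ∑ j ∈ Finset.Icc 1 q, (-1 : F) ^ (j - 1) •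
                (mSym F n (muD s q k j 0) + mSym F n (muD s q k j k))
              = ∑ j ∈ Finset.Icc 1 q, (-1 : F) ^ (j - 1) •
                (mSym F n (muD s q k (j + 1) k) + mSym F n (muD s q k j k)) := by
              refine Finset.sum_congr rfl fun j hj => ?_
              rw [Finset.mem_Icc] at hj
              rw [hG0 j hj.1 hj.2]
            rw [htel1]
            have htel2 := telescope (fun j => mSym F n (muD s q k j k)) q
            rw [htel2, hPq1, smul_zero, sub_zero, hP1]
          · -- middle part
            have hlin : aC.sum (fun mu c => c • mSym F n mu)
                = Finsupp.linearCombination F (fun m => mSym F n m) aC :=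
              (Finsupp.linearCombination_apply F aC).symm
            rw [hlin, haC, map_sum]
            refine Finset.sum_congr rfl fun j hj => ?_
            rw [Finset.mem_Icc] at hj
            rw [map_sum, Finset.smul_sum]
            simp only [Finsupp.linearCombination_single]
            refine (Finset.sum_subset (Finset.filter_subset _ _) ?_).symm
            intro t ht ht'
            rw [Finset.mem_Ioo] at ht
            rw [Finset.mem_filter, Finset.mem_Ioo] at ht'
            have h0 : ¬ (k + (j * k - t) ≤ n) := by tauto
            rw [hvan j t hj.1 hj.2 (by omega), smul_zero]
end
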